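/- arXiv:1505.04175 — 2 statements merged into one kernel-verified Lean document; each statement's English description precedes it below -/
import Mathlib

section
/- Let G be a hyperbolic group (i.e., a finitely generated group whose Cayley graph with respect to some, equivalently any, finite generating set is δ-hyperbolic). Then for every finite generating set X of G there exists a constant C = C(X, δ) such that PCL_{G,X}(n) ≤ C for all n ∈ ℕ. -/
/- Common definitions: words over a generating set, word length, geodesic and
quasi-geodesic words, cyclic permutations, PC-conjugators, the (permutation)
conjugacy length functions, hyperbolic Cayley graphs, and relative hyperbolicity. -/

namespace PCLPaper

variable {G : Type*} [Group G]

/-- `w` is a word over the alphabet `X ⊆ G`. -/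
def IsWord (X : Set G) (w : List G) : Prop := ∀ x ∈ w, x ∈ X

/-- `X` generates `G` as a monoid. -/
def Generates (X : Set G) : Prop := ∀ g : G, ∃ w : List G, IsWord X w ∧ w.prod = g

/-- The word length `|g|_X` of `g` with respect to `X`. -/
noncomputable def wlen (X : Set G) (g : G) : ℕ :=
  sInf {n | ∃ w : List G, IsWord X w ∧ w.prod = g ∧ w.length = n}

/-- The word metric `d_X(g,h)`. -/
noncomputable def wdist (X : Set G) (g h : G) : ℕ := wlen X (g⁻¹ * h)

/-- The ball `B_X(r)` of radius `r` about the identity. -/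
def ball (X : Set G) (r : ℝ) : Set G := {g : G | (wlen X g : ℝ) ≤ r}

/-- A geodesic word: its length equals the word length of the element it represents. -/
def IsGeodesicWord (X : Set G) (w : List G) : Prop :=
  IsWord X w ∧ w.length = wlen X w.prod

/-- `u'` is a cyclic permutation of `u`. -/
def IsCyclicPerm (u u' : List G) : Prop := ∃ i : ℕ, u' = u.drop i ++ u.take i

/-- `w` is a PC-conjugator for the words `u, v`: it conjugates a cyclic permutation
of `u` to a cyclic permutation of `v`. -/
def IsPCConjugator (u v : List G) (w : G) : Prop :=
  ∃ u' v' : List G, IsCyclicPerm u u' ∧ IsCyclicPerm v v' ∧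
    w * u'.prod = v'.prod * w

/-- `PCL_{G,X}(u,v)`: the minimal `X`-length of a PC-conjugator of `u` and `v`. -/
noncomputable def PCLpair (X : Set G) (u v : List G) : ℕ :=
  sInf {n | ∃ w : G, IsPCConjugator u v w ∧ wlen X w = n}

/-- The permutation conjugacy length function `PCL_{G,X}(n)`: the maximum of
`PCL_{G,X}(u,v)` over geodesic words `u, v` representing conjugate elements with
`ℓ(u) + ℓ(v) ≤ n`. -/
noncomputable def PCL (X : Set G) (n : ℕ) : ℕ :=
  sSup {k | ∃ u v : List G, IsGeodesicWord X u ∧ IsGeodesicWord X v ∧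
    IsConj u.prod v.prod ∧ u.length + v.length ≤ n ∧ PCLpair X u v = k}

/-- The minimal `X`-length of a conjugator `w` with `w * a = b * w`. -/
noncomputable def CLFpair (X : Set G) (a b : G) : ℕ :=
  sInf {n | ∃ w : G, w * a = b * w ∧ wlen X w = n}

/-- The conjugacy length function `CLF_{G,X}(n)`. -/
noncomputable def CLF (X : Set G) (n : ℕ) : ℕ :=
  sSup {k | ∃ u v : List G, IsWord X u ∧ IsWord X v ∧
    IsConj u.prod v.prod ∧ u.length + v.length ≤ n ∧ CLFpair X u.prod v.prod = k}

/-- A `(λ,c)`-quasi-geodesic word over `S`. -/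
def IsQuasiGeodesicWord (S : Set G) (lam c : ℝ) (w : List G) : Prop :=
  IsWord S w ∧ ∀ i j : ℕ, i ≤ j → j ≤ w.length →
    (j : ℝ) - (i : ℝ) ≤ lam * (wdist S (w.take i).prod (w.take j).prod : ℝ) + c

/-- The vertices of the path in the Cayley graph starting at `g` and labelled by `w`. -/
def pathVertices (g : G) (w : List G) : Set G :=
  {h : G | ∃ i ≤ w.length, h = g * (w.take i).prod}

/-- The Cayley graph `Γ(G,S)` is `δ`-hyperbolic: geodesic triangles are `δ`-slim. -/
def SlimTriangles (S : Set G) (δ : ℝ) : Prop :=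
  ∀ (g : G) (p q r : List G), IsGeodesicWord S p → IsGeodesicWord S q →
    IsGeodesicWord S r → p.prod * q.prod = r.prod →
    ∀ x ∈ pathVertices g p,
      ∃ y ∈ pathVertices (g * p.prod) q ∪ pathVertices g r, (wdist S x y : ℝ) ≤ δ

/-- The relative generating set `S = X ∪ ⋃_ω (H_ω \ {1})`. -/
def relGen {Ω : Type*} (X : Set G) (H : Ω → Subgroup G) : Set G :=
  X ∪ ⋃ ω, ((H ω : Set G) \ {1})

/-- The index pair `(i,j)` describes an `Hω`-component of the word `p`:
a maximal subpath all of whose edge labels lie in `Hω`. -/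
def IsComponent (Hω : Subgroup G) (p : List G) (i j : ℕ) : Prop :=
  i < j ∧ j ≤ p.length ∧ (∀ k, i ≤ k → k < j → p.getD k 1 ∈ Hω) ∧
  (i = 0 ∨ p.getD (i - 1) 1 ∉ Hω) ∧ (j = p.length ∨ p.getD j 1 ∉ Hω)

/-- The `Hω`-components `(i,j)` of the path `(x,p)` and `(k,l)` of the path `(y,q)`
are connected: all their vertices lie in the same left coset of `Hω`. -/
def ConnectedAt (Hω : Subgroup G) (x : G) (p : List G) (i j : ℕ)
    (y : G) (q : List G) (k l : ℕ) : Prop :=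
  IsComponent Hω p i j ∧ IsComponent Hω q k l ∧
    (x * (p.take i).prod)⁻¹ * (y * (q.take k).prod) ∈ Hω

/-- The two components are connected, for some common parabolic subgroup. -/
def ConnectedComponents {Ω : Type*} (H : Ω → Subgroup G) (x : G) (p : List G) (i j : ℕ)
    (y : G) (q : List G) (k l : ℕ) : Prop :=
  ∃ ω, ConnectedAt (H ω) x p i j y q k l

/-- The bounded coset penetration property for the pair `(G, {H_ω})`. -/
def BCP {Ω : Type*} (X : Set G) (H : Ω → Subgroup G) : Prop :=
  ∀ lam : ℝ, 1 ≤ lam → ∃ a : ℝ, 0 < a ∧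
    ∀ (g : G) (p q : List G),
      IsQuasiGeodesicWord (relGen X H) lam 0 p →
      IsQuasiGeodesicWord (relGen X H) lam 0 q →
      (wdist X (g * p.prod) (g * q.prod) : ℝ) ≤ 1 →
      (∀ ω i j, IsComponent (H ω) p i j →
        a ≤ (wdist X (g * (p.take i).prod) (g * (p.take j).prod) : ℝ) →
        ∃ k l, ConnectedAt (H ω) g p i j g q k l) ∧
      (∀ i j k l, ConnectedComponents H g p i j g q k l →
        (wdist X (g * (p.take i).prod) (g * (q.take k).prod) : ℝ) ≤ a ∧
        (wdist X (g * (p.take j).prod) (g * (q.take l).prod) : ℝ) ≤ a)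

/-- `G` is hyperbolic relative to the subgroups `{H_ω}`, with respect to the
generating set `X`. -/
def RelativelyHyperbolic {Ω : Type*} (X : Set G) (H : Ω → Subgroup G) : Prop :=
  (∃ δ : ℝ, 0 ≤ δ ∧ SlimTriangles (relGen X H) δ) ∧ BCP X H

/-- The generating set of a subgroup `K` induced by `X`: the set `X ∩ K`,
viewed inside `K`. -/
def subGen (X : Set G) (K : Subgroup G) : Set K := {h : K | (h : G) ∈ X}

/-- The base vertex of the `a`-th side of a polygon with sides `sides` based at `g`. -/
def sideBase (g : G) (sides : List (List G)) (a : ℕ) : G :=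
  g * ((sides.take a).flatten).prod

/-- Side `a` of the polygon is a single component, isolated in the polygon. -/
def SideIsolated {Ω : Type*} (H : Ω → Subgroup G) (g : G) (sides : List (List G))
    (a : ℕ) : Prop :=
  (∃ ω, IsComponent (H ω) (sides.getD a []) 0 (sides.getD a []).length) ∧
  ∀ b i j, b < sides.length → ¬(b = a ∧ i = 0 ∧ j = (sides.getD a []).length) →
    ¬ ConnectedComponents H (sideBase g sides a) (sides.getD a []) 0
        (sides.getD a []).length (sideBase g sides b) (sides.getD b []) i j

/-- `D` satisfies the conclusion of the polygon lemma: in any closed polygon whose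
distinguished sides are isolated components and whose remaining sides are
`(λ,c)`-quasi-geodesics, the total `X`-length of the distinguished sides is at
most `D · (number of sides)`. -/
def PolygonConst {Ω : Type*} (X : Set G) (H : Ω → Subgroup G) (lam c D : ℝ) : Prop :=
  ∀ (g : G) (sides : List (List G)) (I : Finset ℕ),
    (sides.flatten).prod = 1 →
    (∀ a ∈ I, a < sides.length ∧ SideIsolated H g sides a) →
    (∀ a, a < sides.length → a ∉ I →
      IsQuasiGeodesicWord (relGen X H) lam c (sides.getD a [])) →
    ∑ a ∈ I, (wlen X ((sides.getD a []).prod) : ℝ) ≤ D * sides.length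

/-- `v` is derived from `u`: obtained by replacing subwords of `u` whose letters all
lie in a single parabolic subgroup by the single element of `G` they represent. -/
def IsDerived {Ω : Type*} (X : Set G) (H : Ω → Subgroup G) (u v : List G) : Prop :=
  ∃ blocks : List (List G), blocks.flatten = u ∧ (∀ b ∈ blocks, b ≠ []) ∧
    (∀ b ∈ blocks, b.length = 1 ∨ ∃ ω, IsWord (X ∩ (H ω : Set G)) b) ∧
    v = blocks.map List.prod

/-- No subword of `v` of length greater than one represents a parabolic element. -/
def NoLongParabolicSubword {Ω : Type*} (H : Ω → Subgroup G) (v : List G) : Prop :=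
  ∀ w₁ w₂ w₃ : List G, v = w₁ ++ w₂ ++ w₃ → 1 < w₂.length → ∀ ω, w₂.prod ∉ H ω

/-- The properties of the finite generating set produced by the generating set lemma
(Lemma 5.3 of Antolín–Ciobanu, Lemma 3.3 of the paper). -/
structure GoodGenSet {Ω : Type*} (X : Set G) (H : Ω → Subgroup G) (lam c : ℝ) : Prop where
  finite : X.Finite
  generates : Generates X
  lam_ge : 1 ≤ lam
  c_ge : 0 ≤ c
  par_gen : ∀ ω : Ω, ∀ h ∈ H ω, ∃ w : List G, IsWord (X ∩ (H ω : Set G)) w ∧ w.prod = h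
  isom : ∀ ω : Ω, ∀ h ∈ H ω, wlen (X ∩ (H ω : Set G)) h = wlen X h
  geo_par : ∀ ω : Ω, ∀ u : List G, IsGeodesicWord X u → u.prod ∈ H ω →
    IsWord (X ∩ (H ω : Set G)) u
  derived : ∀ u : List G, IsGeodesicWord X u → ∃ v : List G, IsDerived X H u v ∧
    IsQuasiGeodesicWord (relGen X H) lam c v ∧ NoLongParabolicSubword H v

/-- The growth function: the number of elements in the ball of radius `r`. -/
noncomputable def growth (X : Set G) (r : ℝ) : ℕ := (ball X r).ncard

/-- The conjugacy growth function: the number of conjugacy classes meeting the ball. -/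
noncomputable def conjGrowth (X : Set G) (r : ℝ) : ℕ := (ConjClasses.mk '' ball X r).ncard

/-- The exponential growth rate `h_{G,X}`. -/
noncomputable def growthRate (X : Set G) : ℝ :=
  Filter.limsup (fun n : ℕ => Real.log (growth X n) / n) Filter.atTop

/-- The exponential conjugacy growth rate `k_{G,X}`. -/
noncomputable def conjGrowthRate (X : Set G) : ℝ :=
  Filter.limsup (fun n : ℕ => Real.log (conjGrowth X n) / n) Filter.atTop

/-- `f ⪯ g`: there is `C > 0` with `f(n) ≤ C·g(C·n) + C` for all `n`. -/
def Preceq (f g : ℕ → ℕ) : Prop := ∃ C : ℕ, 0 < C ∧ ∀ n, f n ≤ C * g (C * n) + C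

/-- Asymptotic equivalence of functions. -/
def Asymp (f g : ℕ → ℕ) : Prop := Preceq f g ∧ Preceq g f

/-- A group is finite-by-abelian: it has a finite normal subgroup with abelian
quotient. -/
def FiniteByAbelian (K : Type*) [Group K] : Prop :=
  ∃ N : Subgroup K, N.Normal ∧ Finite N ∧ ∀ a b : K, a * b * a⁻¹ * b⁻¹ ∈ N

/-! ### Auxiliary lemmas: word metric basics -/

set_option linter.unusedSectionVars false

section Basics

variable (S : Set G)

lemma wlen_set_nonempty (hgen : Generates S) (g : G) :
    {n | ∃ w : List G, IsWord S w ∧ w.prod = g ∧ w.length = n}.Nonempty := by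
  obtain ⟨w, hw, hp⟩ := hgen g
  exact ⟨w.length, w, hw, hp, rfl⟩

lemma exists_min_word (hgen : Generates S) (g : G) :
    ∃ w : List G, IsWord S w ∧ w.prod = g ∧ w.length = wlen S g :=
  Nat.sInf_mem (wlen_set_nonempty S hgen g)

lemma wlen_le_length {w : List G} (hw : IsWord S w) : wlen S w.prod ≤ w.length :=
  Nat.sInf_le ⟨w, hw, rfl, rfl⟩

lemma wlen_one : wlen S (1 : G) = 0 :=
  Nat.le_zero.mp (Nat.sInf_le ⟨[], fun x hx => absurd hx (List.not_mem_nil), rfl, rfl⟩)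

lemma wlen_mul_le (hgen : Generates S) (g h : G) :
    wlen S (g * h) ≤ wlen S g + wlen S h := by
  obtain ⟨w₁, hw₁, hp₁, hl₁⟩ := exists_min_word S hgen g
  obtain ⟨w₂, hw₂, hp₂, hl₂⟩ := exists_min_word S hgen h
  have hW : IsWord S (w₁ ++ w₂) := by
    intro x hx
    rcases List.mem_append.mp hx with h' | h'
    · exact hw₁ x h'
    · exact hw₂ x h'
  have := wlen_le_length S hW
  rwa [List.prod_append, hp₁, hp₂, List.length_append, hl₁, hl₂] at this

lemma wdist_triangle (hgen : Generates S) (g h k : G) :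
    wdist S g k ≤ wdist S g h + wdist S h k := by
  have : g⁻¹ * k = (g⁻¹ * h) * (h⁻¹ * k) := by group
  unfold wdist
  rw [this]
  exact wlen_mul_le S hgen _ _

lemma wdist_self (g : G) : wdist S g g = 0 := by
  unfold wdist
  rw [inv_mul_cancel]
  exact wlen_one S

lemma wdist_mul_left (k g h : G) : wdist S (k * g) (k * h) = wdist S g h := by
  unfold wdist
  congr 1
  group

lemma wlen_eq_wdist_one (g : G) : wdist S 1 g = wlen S g := by
  unfold wdist; rw [inv_one, one_mul]

/-- A generic comparison: if every letter of `w` has `T`-length at most `K`,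
then the product has `T`-length at most `K * w.length`. -/
lemma wlen_prod_le (T : Set G) (hgenT : Generates T) (K : ℕ) :
    ∀ w : List G, (∀ x ∈ w, wlen T x ≤ K) → wlen T w.prod ≤ K * w.length := by
  intro w
  induction w with
  | nil => intro _; simp [wlen_one]
  | cons x w ih =>
      intro hx
      rw [List.prod_cons]
      calc wlen T (x * w.prod) ≤ wlen T x + wlen T w.prod := wlen_mul_le T hgenT _ _
        _ ≤ K + K * w.length := by
            gcongr
            · exact hx x (List.mem_cons_self)
            · exact ih fun y hy => hx y (List.mem_cons_of_mem _ hy)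
        _ = K * (x :: w).length := by rw [List.length_cons]; ring

/-- Comparison constant between two finite generating sets. -/
lemma exists_compare (hS : S.Finite) (hgen : Generates S) (T : Set G)
    (hgenT : Generates T) : ∃ K : ℕ, ∀ g : G, wlen T g ≤ K * wlen S g := by
  classical
  refine ⟨hS.toFinset.sup fun s => wlen T s, fun g => ?_⟩
  obtain ⟨w, hw, hp, hl⟩ := exists_min_word S hgen g
  have := wlen_prod_le T hgenT _ w fun x hx =>
    Finset.le_sup (f := fun s => wlen T s) (hS.mem_toFinset.mpr (hw x hx))
  rwa [hp, hl] at this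

/-- Bound for the length of inverses. -/
lemma exists_inv_bound (hS : S.Finite) (hgen : Generates S) :
    ∃ K : ℕ, 1 ≤ K ∧ ∀ g : G, wlen S g⁻¹ ≤ K * wlen S g := by
  classical
  refine ⟨(hS.toFinset.sup fun s => wlen S s⁻¹) ⊔ 1, le_max_right _ 1, fun g => ?_⟩
  obtain ⟨w, hw, hp, hl⟩ := exists_min_word S hgen g
  suffices h : wlen S w.prod⁻¹ ≤ ((hS.toFinset.sup fun s => wlen S s⁻¹) ⊔ 1) * w.length by
    rwa [hp, hl] at h
  clear hp hl
  induction w with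
  | nil => simp [wlen_one]
  | cons x w ih =>
      rw [List.prod_cons, mul_inv_rev, List.length_cons]
      calc wlen S (w.prod⁻¹ * x⁻¹) ≤ wlen S w.prod⁻¹ + wlen S x⁻¹ :=
            wlen_mul_le S hgen _ _
        _ ≤ _ := by
            have h1 : wlen S x⁻¹ ≤ (hS.toFinset.sup fun s => wlen S s⁻¹) ⊔ 1 :=
              le_trans (Finset.le_sup (f := fun s => wlen S s⁻¹)
                (hS.mem_toFinset.mpr (hw x (List.mem_cons_self)))) (le_max_left _ _)
            have h2 := ih fun y hy => hw y (List.mem_cons_of_mem _ hy)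
            calc wlen S w.prod⁻¹ + wlen S x⁻¹
                ≤ ((hS.toFinset.sup fun s => wlen S s⁻¹) ⊔ 1) * w.length
                  + ((hS.toFinset.sup fun s => wlen S s⁻¹) ⊔ 1) := by gcongr
              _ = _ := by ring

end Basics

/-! ### Geodesic words and their segments -/

section Geo

variable (S : Set G)

/-- The `i`-th vertex of the path labelled by `w` starting at `1`. -/
def pv (w : List G) (i : ℕ) : G := (w.take i).prod

lemma pv_zero (w : List G) : pv w 0 = 1 := rfl

lemma pv_length (w : List G) : pv w w.length = w.prod := by
  unfold pv; rw [List.take_length]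

lemma IsWord.take {w : List G} (hw : IsWord S w) (i : ℕ) : IsWord S (w.take i) :=
  fun x hx => hw x (List.mem_of_mem_take hx)

lemma IsWord.drop {w : List G} (hw : IsWord S w) (i : ℕ) : IsWord S (w.drop i) :=
  fun x hx => hw x (List.mem_of_mem_drop hx)

lemma pv_succ (w : List G) (i : ℕ) (hi : i < w.length) :
    pv w (i + 1) = pv w i * w.getD i 1 := by
  unfold pv
  rw [List.take_succ, List.prod_append]
  congr 1
  simp [List.getElem?_eq_getElem hi, List.getD]

/-- The middle segment of a word, as a group element. -/
lemma pv_segment (w : List G) {i j : ℕ} (hij : i ≤ j) :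
    (pv w i)⁻¹ * pv w j = ((w.drop i).take (j - i)).prod := by
  have h : w.take j = w.take i ++ (w.drop i).take (j - i) := by
    rw [← List.take_add]
    congr 1
    omega
  unfold pv
  rw [h, List.prod_append]
  group

/-- Segments of geodesic words are geodesic: exact distance formula. -/
lemma geodesic_segment {w : List G} (hw : IsGeodesicWord S w) {i j : ℕ}
    (hij : i ≤ j) (hj : j ≤ w.length) :
    wdist S (pv w i) (pv w j) = j - i := by
  have hlenmid : ((w.drop i).take (j - i)).length = j - i := by
    rw [List.length_take, List.length_drop]
    omega
  have hmidword : IsWord S ((w.drop i).take (j - i)) :=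
    IsWord.take S (IsWord.drop S hw.1 i) _
  have hle : wdist S (pv w i) (pv w j) ≤ j - i := by
    have heq : wdist S (pv w i) (pv w j) = wlen S ((w.drop i).take (j - i)).prod := by
      unfold wdist
      rw [pv_segment w hij]
    rw [heq]
    exact le_trans (wlen_le_length S hmidword) (le_of_eq hlenmid)
  refine le_antisymm hle ?_
  by_contra hlt
  push_neg at hlt
  -- replace the middle by a shorter word
  have hne : {n | ∃ u : List G, IsWord S u ∧ u.prod = (pv w i)⁻¹ * pv w j ∧
      u.length = n}.Nonempty := by
    refine ⟨j - i, (w.drop i).take (j - i), hmidword, ?_, hlenmid⟩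
    rw [pv_segment w hij]
  obtain ⟨u, hu, hup, hul⟩ := Nat.sInf_mem hne
  have hulen : u.length < j - i := by
    have : wdist S (pv w i) (pv w j) = u.length := hul.symm
    omega
  set w' := w.take i ++ u ++ w.drop j with hw'
  have hw'word : IsWord S w' := by
    intro x hx
    rcases List.mem_append.mp hx with hx' | hx'
    · rcases List.mem_append.mp hx' with hx'' | hx''
      · exact hw.1 x (List.mem_of_mem_take hx'')
      · exact hu x hx''
    · exact hw.1 x (List.mem_of_mem_drop hx')
  have hw'prod : w'.prod = w.prod := by
    rw [hw', List.prod_append, List.prod_append, hup]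
    have h1 : (w.take i).prod * ((pv w i)⁻¹ * pv w j) = pv w j := by
      unfold pv; group
    rw [h1]
    have h2 : pv w j * (w.drop j).prod = w.prod := by
      unfold pv
      rw [← List.prod_append, List.take_append_drop]
    exact h2
  have hcon : wlen S w.prod ≤ w'.length := by
    rw [← hw'prod]; exact wlen_le_length S hw'word
  have : w'.length < w.length := by
    rw [hw', List.length_append, List.length_append, List.length_take,
      List.length_drop]
    have : i ≤ w.length := le_trans hij hj
    omega
  rw [← hw.2] at hcon
  omega

lemma geodesic_pv_dist_from_one {w : List G} (hw : IsGeodesicWord S w) {j : ℕ}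
    (hj : j ≤ w.length) : wdist S 1 (pv w j) = j := by
  have := geodesic_segment S hw (Nat.zero_le j) hj
  rw [pv_zero] at this
  simpa using this

lemma geodesic_wlen_pv {w : List G} (hw : IsGeodesicWord S w) {j : ℕ}
    (hj : j ≤ w.length) : wlen S (pv w j) = j := by
  rw [← wlen_eq_wdist_one]
  exact geodesic_pv_dist_from_one S hw hj

/-- Balls are finite. -/
lemma ball_finite (hS : S.Finite) (hgen : Generates S) (R : ℕ) :
    {g : G | wlen S g ≤ R}.Finite := by
  classical
  have hword : ∀ R : ℕ, {w : List G | IsWord S w ∧ w.length ≤ R}.Finite := by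
    intro R
    induction R with
    | zero =>
        apply Set.Finite.subset (Set.finite_singleton ([] : List G))
        rintro w ⟨-, hlen⟩
        simp only [Set.mem_singleton_iff]
        exact List.eq_nil_of_length_eq_zero (Nat.le_zero.mp hlen)
    | succ R ih =>
        apply Set.Finite.subset
          ((Set.finite_singleton ([] : List G)).union
            (Set.Finite.image2 (fun x w => x :: w) hS ih))
        rintro w ⟨hword, hlen⟩
        cases w with
        | nil => exact Or.inl rfl
        | cons x w =>
            refine Or.inr (Set.mem_image2.mpr ⟨x, hword x (List.mem_cons_self),
              w, ⟨fun y hy => hword y (List.mem_cons_of_mem _ hy), ?_⟩, rfl⟩)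
            simpa using hlen
  apply Set.Finite.subset ((hword R).image List.prod)
  intro g hg
  simp only [Set.mem_setOf_eq] at hg
  obtain ⟨w, hw, hp, hl⟩ := exists_min_word S hgen g
  exact ⟨w, ⟨hw, by omega⟩, hp⟩

end Geo

/-! ### Cyclic permutations and PC-conjugators -/

section Cyc

lemma isCyclicPerm_iff {u u' : List G} :
    IsCyclicPerm u u' ↔ ∃ a b : List G, u = a ++ b ∧ u' = b ++ a := by
  constructor
  · rintro ⟨i, rfl⟩
    exact ⟨u.take i, u.drop i, (List.take_append_drop i u).symm, rfl⟩
  · rintro ⟨a, b, rfl, rfl⟩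
    refine ⟨a.length, ?_⟩
    rw [List.drop_left, List.take_left]

lemma isCyclicPerm_refl (u : List G) : IsCyclicPerm u u :=
  isCyclicPerm_iff.mpr ⟨[], u, rfl, by simp⟩

lemma isCyclicPerm_iff_rotated {u u' : List G} :
    IsCyclicPerm u u' ↔ u ~r u' := by
  constructor
  · rintro ⟨i, rfl⟩
    by_cases hi : i ≤ u.length
    · exact ⟨i, List.rotate_eq_drop_append_take hi⟩
    · refine ⟨0, ?_⟩
      push_neg at hi
      rw [List.rotate_zero, List.drop_eq_nil_of_le (le_of_lt hi),
        List.take_of_length_le (le_of_lt hi), List.nil_append]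
  · rintro ⟨n, rfl⟩
    rcases Nat.eq_zero_or_pos u.length with h0 | hpos
    · refine ⟨0, ?_⟩
      rw [List.eq_nil_of_length_eq_zero h0]
      simp
    · refine ⟨n % u.length, ?_⟩
      rw [← List.rotate_mod,
        List.rotate_eq_drop_append_take (le_of_lt (Nat.mod_lt n hpos))]

lemma isCyclicPerm_trans {u u' u'' : List G} (h1 : IsCyclicPerm u u')
    (h2 : IsCyclicPerm u' u'') : IsCyclicPerm u u'' :=
  isCyclicPerm_iff_rotated.mpr
    ((isCyclicPerm_iff_rotated.mp h1).trans (isCyclicPerm_iff_rotated.mp h2))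

lemma cyclic_prefix_conj (u' : List G) (j : ℕ) :
    (u'.drop j ++ u'.take j).prod = (pv u' j)⁻¹ * u'.prod * pv u' j := by
  have : u'.prod = (u'.take j).prod * (u'.drop j).prod := by
    rw [← List.prod_append, List.take_append_drop]
  rw [List.prod_append, this]
  unfold pv
  group

/-- Closure of the set of PC-conjugators of a fixed pair of cyclic permutations
under multiplication by powers and prefixes. -/
lemma pc_family {u v u' v' : List G} (hu' : IsCyclicPerm u u')
    (hv' : IsCyclicPerm v v') {w : G} (hw : w * u'.prod = v'.prod * w)
    (i j : ℕ) (k l : ℤ) :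
    IsPCConjugator u v ((pv v' i)⁻¹ * v'.prod ^ k * w * u'.prod ^ l * pv u' j) := by
  refine ⟨u'.drop j ++ u'.take j, v'.drop i ++ v'.take i,
    isCyclicPerm_trans hu' ⟨j, rfl⟩, isCyclicPerm_trans hv' ⟨i, rfl⟩, ?_⟩
  rw [cyclic_prefix_conj, cyclic_prefix_conj]
  have hsc : SemiconjBy w u'.prod v'.prod := hw
  have hscl : w * u'.prod ^ (l + 1) = v'.prod * (w * u'.prod ^ l) := by
    have h1 := (hsc.zpow_right l).eq
    have h2 := (hsc.zpow_right (l + 1)).eq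
    rw [h2, h1]
    group
  set a := u'.prod
  set b := v'.prod
  set p := pv v' i
  set q := pv u' j
  show p⁻¹ * b ^ k * w * a ^ l * q * (q⁻¹ * a * q) = p⁻¹ * b * p * (p⁻¹ * b ^ k * w * a ^ l * q)
  have key : w * a ^ l * a = b * (w * a ^ l) := by
    have : a ^ l * a = a ^ (l + 1) := by group
    rw [mul_assoc, this, hscl]
  calc p⁻¹ * b ^ k * w * a ^ l * q * (q⁻¹ * a * q)
      = p⁻¹ * b ^ k * (w * a ^ l * a) * q := by group
    _ = p⁻¹ * b ^ k * (b * (w * a ^ l)) * q := by rw [key]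
    _ = p⁻¹ * b * p * (p⁻¹ * b ^ k * w * a ^ l * q) := by
        have : b ^ k * b = b * b ^ k := by group
        group

lemma pc_exists {u v : List G} (hconj : IsConj u.prod v.prod) :
    ∃ w : G, IsPCConjugator u v w := by
  obtain ⟨c, hc⟩ := isConj_iff.mp hconj
  refine ⟨c, u, v, isCyclicPerm_refl u, isCyclicPerm_refl v, ?_⟩
  rw [← hc]
  group

end Cyc

/-! ### Consequences of slim triangles -/

section Slim

variable (S : Set G)

lemma geodesic_nil : IsGeodesicWord S ([] : List G) :=
  ⟨fun x hx => absurd hx (List.not_mem_nil), by simp [wlen_one]⟩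

/-- ℕ-valued version of slimness. -/
def NSlim (Δ : ℕ) : Prop :=
  ∀ (g : G) (p q r : List G), IsGeodesicWord S p → IsGeodesicWord S q →
    IsGeodesicWord S r → p.prod * q.prod = r.prod →
    ∀ t ≤ p.length, ∃ y : G, wdist S (g * pv p t) y ≤ Δ ∧
      ((∃ s ≤ q.length, y = g * p.prod * pv q s) ∨ (∃ s ≤ r.length, y = g * pv r s))

lemma slimTriangles_nslim {δ : ℝ} (h : SlimTriangles S δ) :
    NSlim S ⌊δ⌋₊ := by
  intro g p q r hp hq hr hpqr t ht
  obtain ⟨y, hy, hyd⟩ := h g p q r hp hq hr hpqr (g * pv p t) ⟨t, ht, rfl⟩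
  refine ⟨y, Nat.le_floor hyd, ?_⟩
  rcases hy with hy | hy
  · obtain ⟨i, hi, hyi⟩ := hy
    exact Or.inl ⟨i, hi, hyi⟩
  · obtain ⟨i, hi, hyi⟩ := hy
    exact Or.inr ⟨i, hi, hyi⟩

/-- Bigon lemma: a reversed geodesic stays close to a geodesic with the
same endpoints. -/
lemma nslim_bigon {Δ : ℕ} (h : NSlim S Δ) {c e : List G}
    (hc : IsGeodesicWord S c) (he : IsGeodesicWord S e)
    (hprod : e.prod = c.prod⁻¹) {r : ℕ} (hr : r ≤ e.length) :
    ∃ t ≤ c.length, wdist S (c.prod * pv e r) (pv c t) ≤ Δ := by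
  obtain ⟨y, hyd, hy⟩ := h c.prod e c [] he hc (geodesic_nil S)
    (by rw [hprod]; simp) r hr
  rcases hy with ⟨s, hs, rfl⟩ | ⟨s, hs, rfl⟩
  · refine ⟨s, hs, ?_⟩
    have : c.prod * e.prod * pv c s = pv c s := by rw [hprod]; group
    rwa [this] at hyd
  · refine ⟨c.length, le_refl _, ?_⟩
    have hs0 : s = 0 := Nat.le_zero.mp hs
    have : c.prod * pv [] s = pv c c.length := by
      rw [hs0, pv_zero, pv_length, mul_one]
    rwa [this] at hyd

/-- Reversal of distances costs a multiplicative constant. -/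
lemma wdist_symm_le {K : ℕ} (hK : ∀ g : G, wlen S g⁻¹ ≤ K * wlen S g) (a b : G) :
    wdist S b a ≤ K * wdist S a b := by
  unfold wdist
  have : b⁻¹ * a = (a⁻¹ * b)⁻¹ := by group
  rw [this]
  exact hK _

end Slim

/-! ### Stability of geodesics: log-stability and the Morse lemma -/

section Morse

variable {S : Set G}

lemma exists_geodesic_word (hgen : Generates S) (g : G) :
    ∃ c : List G, IsGeodesicWord S c ∧ c.prod = g := by
  obtain ⟨w, hw, hp, hl⟩ := exists_min_word S hgen g
  exact ⟨w, ⟨hw, by rw [hp, hl]⟩, hp⟩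

lemma wlen_letter_le_one {s : G} (hs : s ∈ S) : wlen S s ≤ 1 := by
  have : IsWord S [s] := by intro x hx; rwa [List.mem_singleton.mp hx]
  simpa using wlen_le_length S this

/-- Log-stability: a geodesic between the endpoints of a chain of `≤ 2^k` steps,
each of size `≤ κ`, stays within `2Δk + Kκ` of the chain. -/
lemma log_stability (hgen : Generates S) {Δ K : ℕ} (hslim : NSlim S Δ)
    (hK : ∀ g : G, wlen S g⁻¹ ≤ K * wlen S g) (κ : ℕ) :
    ∀ (k N : ℕ), N ≤ 2 ^ k → ∀ z : ℕ → G,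
      (∀ i, i < N → wdist S (z i) (z (i + 1)) ≤ κ) →
      ∀ c : List G, IsGeodesicWord S c → z 0 * c.prod = z N →
      ∀ t, t ≤ c.length → ∃ i ≤ N, wdist S (z 0 * pv c t) (z i) ≤ 2 * Δ * k + K * κ := by
  intro k
  induction k with
  | zero =>
      intro N hN z hz c hc hcz t ht
      refine ⟨0, Nat.zero_le _, ?_⟩
      have h1 : wdist S (z 0 * pv c t) (z 0) ≤ K * t := by
        have heq : wdist S (z 0 * pv c t) (z 0) = wlen S (pv c t)⁻¹ := by
          unfold wdist
          congr 1
          group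
        rw [heq]
        calc wlen S (pv c t)⁻¹ ≤ K * wlen S (pv c t) := hK _
          _ ≤ K * t := by
              gcongr
              exact le_trans (wlen_le_length S (IsWord.take S hc.1 t))
                (by rw [List.length_take]; omega)
      have hN1 : N ≤ 1 := by simpa using hN
      have hlen : c.length ≤ κ := by
        have hc2 := hc.2
        interval_cases N
        · have hcp : c.prod = 1 := by
            have h := hcz
            rwa [mul_eq_left] at h
          rw [hc2, hcp, wlen_one]
          omega
        · have hcp : c.prod = (z 0)⁻¹ * z 1 := by rw [← hcz]; group
          have hstep := hz 0 (by omega)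
          unfold wdist at hstep
          rw [hc2, hcp]
          exact hstep
      calc wdist S (z 0 * pv c t) (z 0) ≤ K * t := h1
        _ ≤ K * κ := by gcongr; omega
        _ ≤ 2 * Δ * 0 + K * κ := by omega
  | succ k ih =>
      intro N hN z hz c hc hcz t ht
      set M := N / 2 with hM
      have hpow : (2:ℕ) ^ (k+1) = 2 * 2 ^ k := by ring
      have hM2 : M ≤ 2 ^ k := by omega
      have hNM2 : N - M ≤ 2 ^ k := by omega
      obtain ⟨c₁, hc₁, hc₁p⟩ := exists_geodesic_word hgen ((z 0)⁻¹ * z M)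
      obtain ⟨d, hd, hdp⟩ := exists_geodesic_word hgen ((z M)⁻¹ * z N)
      obtain ⟨q, hq, hqp⟩ := exists_geodesic_word hgen ((z N)⁻¹ * z M)
      have hcprod : c.prod = (z 0)⁻¹ * z N := by
        rw [← hcz]; group
      have hpq : c.prod * q.prod = c₁.prod := by
        rw [hcprod, hqp, hc₁p]; group
      obtain ⟨y, hyd, hy⟩ := hslim (z 0) c q c₁ hc hq hc₁ hpq t ht
      rcases hy with ⟨s, hs, rfl⟩ | ⟨s, hs, rfl⟩
      · -- close to the reversed second half
        obtain ⟨t', ht', hb⟩ := nslim_bigon S hslim hd hq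
          (by rw [hqp, hdp]; group) hs
        have hb' : wdist S (z 0 * c.prod * pv q s) (z M * pv d t') ≤ Δ := by
          have h1 : z 0 * c.prod * pv q s = z M * (d.prod * pv q s) := by
            rw [hcprod, hdp]; group
          rw [h1]
          calc wdist S (z M * (d.prod * pv q s)) (z M * pv d t')
              = wdist S (d.prod * pv q s) (pv d t') := wdist_mul_left S _ _ _
            _ ≤ Δ := hb
        have hmn : M + (N - M) = N := by omega
        have hzd : (fun i => z (M + i)) 0 * d.prod = (fun i => z (M + i)) (N - M) := by
          show z (M + 0) * d.prod = z (M + (N - M))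
          rw [Nat.add_zero, hmn, hdp]
          group
        obtain ⟨i, hi, hdist⟩ := ih (N - M) hNM2 (fun i => z (M + i))
          (fun i hilt => by
            have h' := hz (M + i) (by omega)
            simpa [Nat.add_assoc] using h')
          d hd hzd t' ht'
        have hdist' : wdist S (z M * pv d t') (z (M + i)) ≤ 2 * Δ * k + K * κ := by
          simpa using hdist
        refine ⟨M + i, by omega, ?_⟩
        calc wdist S (z 0 * pv c t) (z (M + i))
            ≤ wdist S (z 0 * pv c t) (z 0 * c.prod * pv q s)
              + wdist S (z 0 * c.prod * pv q s) (z (M + i)) := wdist_triangle S hgen _ _ _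
          _ ≤ Δ + (wdist S (z 0 * c.prod * pv q s) (z M * pv d t')
              + wdist S (z M * pv d t') (z (M + i))) := by
                gcongr
                exact wdist_triangle S hgen _ _ _
          _ ≤ Δ + (Δ + (2 * Δ * k + K * κ)) := by
                gcongr
          _ ≤ 2 * Δ * (k + 1) + K * κ := le_of_eq (by ring)
      · -- close to the first half
        obtain ⟨i, hi, hdist⟩ := ih M hM2 z
          (fun i hilt => hz i (by omega)) c₁ hc₁
          (by rw [hc₁p]; group) s hs
        refine ⟨i, by omega, ?_⟩
        calc wdist S (z 0 * pv c t) (z i)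
            ≤ wdist S (z 0 * pv c t) (z 0 * pv c₁ s) + wdist S (z 0 * pv c₁ s) (z i) :=
              wdist_triangle S hgen _ _ _
          _ ≤ Δ + (2 * Δ * k + K * κ) := by gcongr
          _ ≤ 2 * Δ + (2 * Δ * k + K * κ) := by omega
          _ = 2 * Δ * (k + 1) + K * κ := by ring

lemma sq_lt_two_pow : ∀ m : ℕ, 5 ≤ m → m * m < 2 ^ m := by
  intro m hm
  induction m with
  | zero => omega
  | succ n ih =>
      rcases Nat.lt_or_ge n 5 with hn | hn
      · have hn3 : n = 4 := by omega
        subst hn3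
        norm_num
      · have h1 := ih (by omega)
        have h2 : (n + 1) * (n + 1) ≤ 2 * (n * n) := by nlinarith
        calc (n+1) * (n+1) ≤ 2 * (n * n) := h2
          _ < 2 * 2 ^ n := by omega
          _ = 2 ^ (n + 1) := by ring

lemma log_bound (a b : ℕ) : ∃ M : ℕ, ∀ n : ℕ,
    n ≤ a * Nat.log 2 (b * n) + a → n ≤ M := by
  rcases Nat.eq_zero_or_pos a with rfl | ha
  · exact ⟨0, fun n hn => by simpa using hn⟩
  rcases Nat.eq_zero_or_pos b with rfl | hb
  · exact ⟨a, fun n hn => by simpa using hn⟩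
  set Q := 3 * a * b + 6 with hQ
  refine ⟨a * Q + a, fun n hn => ?_⟩
  by_contra hcon
  push_neg at hcon
  set L := Nat.log 2 (b * n) with hL
  have hQn : Q ≤ n / a := by
    rw [Nat.le_div_iff_mul_le ha]
    have : Q * a = a * Q := by ring
    omega
  set m := n / a - 1 with hm'
  have hm6 : 3 * a * b + 5 ≤ m := by
    have hab : 0 < 3 * a * b := by positivity
    omega
  have hm4 : 5 ≤ m := by
    have hab : 0 < 3 * a * b := by positivity
    omega
  have hLm : m ≤ L := by
    have hd : n / a * a ≤ n := Nat.div_mul_le_self n a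
    have h1 : a * (m + 1) ≤ n := by
      have h2 : (m + 1) * a ≤ n / a * a := by
        have : m + 1 ≤ n / a := by omega
        exact Nat.mul_le_mul_right a this
      have h3 : (m + 1) * a = a * (m + 1) := by ring
      omega
    have h4 : a * (m + 1) ≤ a * (L + 1) := by
      have : a * (L + 1) = a * L + a := by ring
      omega
    have := Nat.le_of_mul_le_mul_left h4 ha
    omega
  have hn0 : 1 ≤ n := by omega
  have hpow : 2 ^ L ≤ b * n :=
    Nat.pow_log_le_self 2 (Nat.mul_ne_zero (by omega) (by omega))
  have hbn : b * n ≤ m * m := by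
    have hmod : n % a < a := Nat.mod_lt n ha
    have hdm := Nat.div_add_mod n a
    have h1 : n / a ≤ m + 1 := by omega
    have h2 : n < a * (m + 2) := by
      have h3 : a * (n / a) ≤ a * (m + 1) := Nat.mul_le_mul_left a h1
      have h4 : a * (m + 2) = a * (m + 1) + a := by ring
      omega
    nlinarith [h2, hm6, ha, hb, hm4]
  have h2m : m * m < 2 ^ m := sq_lt_two_pow m hm4
  have hml : (2:ℕ) ^ m ≤ 2 ^ L := Nat.pow_le_pow_right (by norm_num) hLm
  omega

lemma wlen_pv_le {c : List G} (hc : IsWord S c) (r : ℕ) : wlen S (pv c r) ≤ r :=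
  le_trans (wlen_le_length S (IsWord.take S hc r))
    (by rw [List.length_take]; omega)

lemma geodesic_subword {c : List G} (hc : IsGeodesicWord S c) {i j : ℕ}
    (hij : i ≤ j) (hj : j ≤ c.length) :
    IsGeodesicWord S ((c.drop i).take (j - i)) ∧
      ((c.drop i).take (j - i)).prod = (pv c i)⁻¹ * pv c j ∧
      ((c.drop i).take (j - i)).length = j - i := by
  have hlen : ((c.drop i).take (j - i)).length = j - i := by
    rw [List.length_take, List.length_drop]; omega
  have hprod : ((c.drop i).take (j - i)).prod = (pv c i)⁻¹ * pv c j :=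
    (pv_segment c hij).symm
  refine ⟨⟨IsWord.take S (IsWord.drop S hc.1 i) _, ?_⟩, hprod, hlen⟩
  rw [hlen, hprod]
  have := geodesic_segment S hc hij hj
  unfold wdist at this
  omega

lemma pv_subword {c : List G} {i j r : ℕ} (hr : r ≤ j - i) :
    pv ((c.drop i).take (j - i)) r = (pv c i)⁻¹ * pv c (i + r) := by
  show (((c.drop i).take (j - i)).take r).prod = _
  rw [List.take_take, min_eq_left hr]
  have h1 : (c.drop i).take r = (c.drop i).take (i + r - i) := by
    congr 1
    omega
  rw [h1, ← pv_segment c (by omega : i ≤ i + r)]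

/-- The Morse lemma: a geodesic between the endpoints of a quasigeodesic chain
stays within a uniformly bounded distance of the chain. -/
lemma morse_lemma (hgen : Generates S) {Δ K : ℕ} (hslim : NSlim S Δ)
    (hK : ∀ g : G, wlen S g⁻¹ ≤ K * wlen S g) (hK1 : 1 ≤ K) (κ lam : ℕ) :
    ∃ M₀ : ℕ, ∀ (N : ℕ) (z : ℕ → G),
      (∀ i, i < N → wdist S (z i) (z (i + 1)) ≤ κ) →
      (∀ i j, i ≤ j → j ≤ N → j - i ≤ lam * wdist S (z i) (z j)) →
      ∀ c : List G, IsGeodesicWord S c → z 0 * c.prod = z N →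
      ∀ t, t ≤ c.length → ∃ i ≤ N, wdist S (z 0 * pv c t) (z i) ≤ M₀ := by
  classical
  set κ' : ℕ := K * κ + κ + 1 with hκ'
  set a₀ : ℕ := 2 * Δ + K * κ' with ha₀
  set C₂ : ℕ := 1 + K + lam * (K + 2 * (K * (K * (K + 1))) + 1) with hC₂
  obtain ⟨M₁, hM₁⟩ := log_bound a₀ C₂
  refine ⟨M₁, ?_⟩
  intro N z hstep hlow c hc hcz
  set Dmin : ℕ → ℕ := fun t => sInf {d | ∃ i ≤ N, wdist S (z 0 * pv c t) (z i) = d}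
    with hDmin
  have hDne : ∀ t, {d | ∃ i ≤ N, wdist S (z 0 * pv c t) (z i) = d}.Nonempty :=
    fun t => ⟨wdist S (z 0 * pv c t) (z 0), 0, Nat.zero_le N, rfl⟩
  set D := (Finset.range (c.length + 1)).sup Dmin with hD
  have hDle : ∀ t, t ≤ c.length → Dmin t ≤ D := by
    intro t ht
    rw [hD]
    exact Finset.le_sup (Finset.mem_range.mpr (by omega))
  have hDminmem : ∀ t, ∃ i ≤ N, wdist S (z 0 * pv c t) (z i) = Dmin t := by
    intro t
    exact Nat.sInf_mem (hDne t)
  suffices hDM : D ≤ M₁ by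
    intro t ht
    obtain ⟨i, hiN, hieq⟩ := hDminmem t
    refine ⟨i, hiN, ?_⟩
    have := hDle t ht
    omega
  rcases Nat.eq_zero_or_pos D with hD0 | hD1
  · omega
  obtain ⟨ts, htmem, hteq⟩ := Finset.exists_mem_eq_sup (Finset.range (c.length + 1))
    ⟨0, Finset.mem_range.mpr (by omega)⟩ Dmin
  rw [← hD] at hteq
  have htlen : ts ≤ c.length := by
    have := Finset.mem_range.mp htmem
    omega
  have hall : ∀ i, i ≤ N → D ≤ wdist S (z 0 * pv c ts) (z i) := by
    intro i hi
    rw [hteq]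
    exact Nat.sInf_le ⟨i, hi, rfl⟩
  set T := K * (K + 1) * D with hT
  set tm := ts - T with htm
  set tp := min c.length (ts + T) with htp
  have htm_le : tm ≤ ts := by omega
  have htp_ge : ts ≤ tp := by omega
  have htp_len : tp ≤ c.length := by omega
  have htmtp : tm ≤ tp := by omega
  have hrealize : ∀ t, t ≤ c.length → ∃ i ≤ N, wdist S (z 0 * pv c t) (z i) ≤ D := by
    intro t ht
    obtain ⟨i, hiN, hieq⟩ := hDminmem t
    refine ⟨i, hiN, ?_⟩
    have := hDle t ht
    omega
  obtain ⟨im, himN, hm, hm0⟩ : ∃ i ≤ N, wdist S (z 0 * pv c tm) (z i) ≤ D ∧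
      (tm = 0 → wdist S (z 0 * pv c tm) (z i) = 0) := by
    by_cases h0 : tm = 0
    · refine ⟨0, Nat.zero_le N, ?_, fun _ => ?_⟩
      · rw [h0, pv_zero, mul_one, wdist_self]
        omega
      · rw [h0, pv_zero, mul_one, wdist_self]
    · obtain ⟨i, hiN, hi⟩ := hrealize tm (by omega)
      exact ⟨i, hiN, hi, fun h => absurd h h0⟩
  obtain ⟨ip, hipN, hp, hp0⟩ : ∃ i ≤ N, wdist S (z 0 * pv c tp) (z i) ≤ D ∧
      (tp = c.length → wdist S (z 0 * pv c tp) (z i) = 0 ∧ i = N) := by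
    by_cases h0 : tp = c.length
    · refine ⟨N, le_refl N, ?_, fun _ => ⟨?_, rfl⟩⟩
      · rw [h0, pv_length, hcz, wdist_self]
        omega
      · rw [h0, pv_length, hcz, wdist_self]
    · obtain ⟨i, hiN, hi⟩ := hrealize tp (by omega)
      exact ⟨i, hiN, hi, fun h => absurd h h0⟩
  obtain ⟨a, haw, hap⟩ := exists_geodesic_word hgen ((z 0 * pv c tm)⁻¹ * z im)
  obtain ⟨b, hbw, hbp⟩ := exists_geodesic_word hgen ((z ip)⁻¹ * (z 0 * pv c tp))
  set n₁ := a.length with hn₁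
  set n₂ := (ip - im) + (im - ip) with hn₂
  set n₃ := b.length with hn₃
  have hn₁D : n₁ ≤ D := by
    have h1 : n₁ = wdist S (z 0 * pv c tm) (z im) := by
      rw [hn₁, haw.2, hap]
      rfl
    omega
  have hn₃wd : n₃ = wdist S (z ip) (z 0 * pv c tp) := by
    rw [hn₃, hbw.2, hbp]
    rfl
  have hn₃D : n₃ ≤ K * D := by
    have h2 : wdist S (z ip) (z 0 * pv c tp) ≤ K * wdist S (z 0 * pv c tp) (z ip) :=
      wdist_symm_le S hK _ _
    have h3 : K * wdist S (z 0 * pv c tp) (z ip) ≤ K * D := Nat.mul_le_mul_left K hp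
    omega
  set idx : ℕ → ℕ := fun r => if im ≤ ip then im + r else im - r with hidx
  set ζ : ℕ → G := fun j =>
    if j ≤ n₁ then z 0 * pv c tm * pv a j
    else if j ≤ n₁ + n₂ then z (idx (j - n₁))
    else z ip * pv b (j - n₁ - n₂) with hζ
  set Ntot := n₁ + n₂ + n₃ with hNtot
  have hζA : ∀ r, r ≤ n₁ → ζ r = z 0 * pv c tm * pv a r := by
    intro r hr
    simp only [hζ]
    rw [if_pos hr]
  have hζend₁ : z 0 * pv c tm * pv a n₁ = z im := by
    rw [hn₁, pv_length, hap]
    group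
  have hidx0 : idx 0 = im := by
    simp only [hidx]
    split <;> omega
  have hidxn₂ : idx n₂ = ip := by
    simp only [hidx, hn₂]
    split <;> omega
  have hidxN : ∀ r, r ≤ n₂ → idx r ≤ N := by
    intro r hr
    simp only [hidx]
    split <;> omega
  have hζM : ∀ r, r ≤ n₂ → ζ (n₁ + r) = z (idx r) := by
    intro r hr
    rcases Nat.eq_zero_or_pos r with rfl | hrpos
    · simp only [hζ, Nat.add_zero]
      rw [if_pos (le_refl n₁), hζend₁, hidx0]
    · simp only [hζ]
      rw [if_neg (by omega), if_pos (by omega)]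
      have h1 : n₁ + r - n₁ = r := by omega
      rw [h1]
  have hζB : ∀ r, r ≤ n₃ → ζ (n₁ + n₂ + r) = z ip * pv b r := by
    intro r hr
    rcases Nat.eq_zero_or_pos r with rfl | hrpos
    · rw [Nat.add_zero, hζM n₂ (le_refl n₂), hidxn₂, pv_zero, mul_one]
    · simp only [hζ]
      rw [if_neg (by omega), if_neg (by omega)]
      have h1 : n₁ + n₂ + r - n₁ - n₂ = r := by omega
      rw [h1]
  have hζ0 : ζ 0 = z 0 * pv c tm := by
    rw [hζA 0 (Nat.zero_le n₁), pv_zero, mul_one]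
  have hζNtot : ζ Ntot = z 0 * pv c tp := by
    rw [hNtot, hζB n₃ (le_refl n₃), hn₃, pv_length, hbp]
    group
  have hζstep : ∀ j, j < Ntot → wdist S (ζ j) (ζ (j + 1)) ≤ κ' := by
    intro j hj
    rcases Nat.lt_or_ge j n₁ with hj1 | hj1
    · rw [hζA j (by omega), hζA (j+1) (by omega), wdist_mul_left]
      have h1 := geodesic_segment S haw (by omega : j ≤ j + 1)
        (by rw [← hn₁]; omega : j + 1 ≤ a.length)
      rw [h1]
      omega
    · rcases Nat.lt_or_ge j (n₁ + n₂) with hj2 | hj2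
      · have hr : j - n₁ < n₂ := by omega
        have e1 : ζ j = z (idx (j - n₁)) := by
          have h := hζM (j - n₁) (by omega)
          rw [show n₁ + (j - n₁) = j from by omega] at h
          exact h
        have e2 : ζ (j + 1) = z (idx (j - n₁ + 1)) := by
          have h := hζM (j - n₁ + 1) (by omega)
          rw [show n₁ + (j - n₁ + 1) = j + 1 from by omega] at h
          exact h
        rw [e1, e2]
        by_cases hord : im ≤ ip
        · have hi1 : idx (j - n₁) = im + (j - n₁) := by simp only [hidx, if_pos hord]
          have hi2 : idx (j - n₁ + 1) = im + (j - n₁) + 1 := by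
            simp only [hidx, if_pos hord]
            omega
          rw [hi1, hi2]
          have hlt : im + (j - n₁) < N := by
            rw [hn₂] at hr
            omega
          have := hstep (im + (j - n₁)) hlt
          omega
        · push_neg at hord
          have hi1 : idx (j - n₁) = im - (j - n₁) := by
            simp only [hidx, if_neg (by omega : ¬ im ≤ ip)]
          have hi2 : idx (j - n₁ + 1) = im - (j - n₁ + 1) := by
            simp only [hidx, if_neg (by omega : ¬ im ≤ ip)]
          rw [hi1, hi2]
          have hrim : j - n₁ + 1 ≤ im - ip := by
            rw [hn₂] at hr
            omega
          have h5 := hstep (im - (j - n₁ + 1)) (by omega)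
          rw [show im - (j - n₁ + 1) + 1 = im - (j - n₁) from by omega] at h5
          calc wdist S (z (im - (j - n₁))) (z (im - (j - n₁ + 1)))
              ≤ K * wdist S (z (im - (j - n₁ + 1))) (z (im - (j - n₁))) :=
                wdist_symm_le S hK _ _
            _ ≤ K * κ := Nat.mul_le_mul_left K h5
            _ ≤ κ' := by omega
      · have e1 : ζ j = z ip * pv b (j - n₁ - n₂) := by
          have h := hζB (j - n₁ - n₂) (by omega)
          rw [show n₁ + n₂ + (j - n₁ - n₂) = j from by omega] at h
          exact h
        have e2 : ζ (j + 1) = z ip * pv b (j - n₁ - n₂ + 1) := by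
          have h := hζB (j - n₁ - n₂ + 1) (by omega)
          rw [show n₁ + n₂ + (j - n₁ - n₂ + 1) = j + 1 from by omega] at h
          exact h
        rw [e1, e2, wdist_mul_left]
        have h1 := geodesic_segment S hbw (by omega : j - n₁ - n₂ ≤ j - n₁ - n₂ + 1)
          (by rw [← hn₃]; omega : j - n₁ - n₂ + 1 ≤ b.length)
        rw [h1]
        omega
  have hlower : ∀ j, j ≤ Ntot → D ≤ wdist S (z 0 * pv c ts) (ζ j) := by
    intro j hj
    rcases le_or_gt j n₁ with hj1 | hj1
    · rcases Nat.eq_zero_or_pos tm with h0 | hpos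
      · have hn₁0 : n₁ = 0 := by
          have h1 := hm0 h0
          have he : n₁ = wdist S (z 0 * pv c tm) (z im) := by
            rw [hn₁, haw.2, hap]
            rfl
          omega
        have hj0 : j = 0 := by omega
        rw [hj0, hζ0, h0, pv_zero, mul_one]
        exact hall 0 (Nat.zero_le N)
      · rw [hζA j hj1]
        have hTm : wdist S (z 0 * pv c tm) (z 0 * pv c ts) = T := by
          rw [wdist_mul_left, geodesic_segment S hc htm_le htlen]
          omega
        have h1 : T ≤ K * wdist S (z 0 * pv c ts) (z 0 * pv c tm) := by
          have h := wdist_symm_le S hK (z 0 * pv c ts) (z 0 * pv c tm)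
          omega
        have h2 : wdist S (z 0 * pv c ts) (z 0 * pv c tm)
            ≤ wdist S (z 0 * pv c ts) (z 0 * pv c tm * pv a j)
              + wdist S (z 0 * pv c tm * pv a j) (z 0 * pv c tm) :=
          wdist_triangle S hgen _ _ _
        have h3 : wdist S (z 0 * pv c tm * pv a j) (z 0 * pv c tm) ≤ K * D := by
          have e1 : wdist S (z 0 * pv c tm) (z 0 * pv c tm * pv a j) = wlen S (pv a j) := by
            unfold wdist
            congr 1
            group
          have e2 : wdist S (z 0 * pv c tm * pv a j) (z 0 * pv c tm)
              ≤ K * wdist S (z 0 * pv c tm) (z 0 * pv c tm * pv a j) :=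
            wdist_symm_le S hK _ _
          have e3 : wlen S (pv a j) ≤ j := wlen_pv_le haw.1 j
          have e4 : K * wlen S (pv a j) ≤ K * D :=
            Nat.mul_le_mul_left K (by omega)
          rw [e1] at e2
          omega
        have h4 : K * (wdist S (z 0 * pv c ts) (z 0 * pv c tm * pv a j)
            + wdist S (z 0 * pv c tm * pv a j) (z 0 * pv c tm))
            = K * wdist S (z 0 * pv c ts) (z 0 * pv c tm * pv a j)
            + K * wdist S (z 0 * pv c tm * pv a j) (z 0 * pv c tm) := by ring
        have h5 := Nat.mul_le_mul_left K h2
        have h6 := Nat.mul_le_mul_left K h3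
        have h7 : T = K * (K * D) + K * D := by rw [hT]; ring
        have h8 : K * D ≤ K * wdist S (z 0 * pv c ts) (z 0 * pv c tm * pv a j) := by
          omega
        exact Nat.le_of_mul_le_mul_left h8 (by omega)
    · rcases le_or_gt j (n₁ + n₂) with hj2 | hj2
      · have e1 : ζ j = z (idx (j - n₁)) := by
          have h := hζM (j - n₁) (by omega)
          rw [show n₁ + (j - n₁) = j from by omega] at h
          exact h
        rw [e1]
        exact hall _ (hidxN _ (by omega))
      · have e0 : ζ j = z ip * pv b (j - n₁ - n₂) := by
          have h := hζB (j - n₁ - n₂) (by omega)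
          rw [show n₁ + n₂ + (j - n₁ - n₂) = j from by omega] at h
          exact h
        rw [e0]
        rcases Nat.eq_or_lt_of_le htp_len with heq | hlt
        · exfalso
          obtain ⟨hwd0, -⟩ := hp0 heq
          have h2 := wdist_symm_le S hK (z 0 * pv c tp) (z ip)
          rw [hwd0, Nat.mul_zero] at h2
          omega
        · have htpv : tp = ts + T := by omega
          have hTp : wdist S (z 0 * pv c ts) (z 0 * pv c tp) = T := by
            rw [wdist_mul_left, geodesic_segment S hc htp_ge htp_len]
            omega
          have h2 : wdist S (z 0 * pv c ts) (z 0 * pv c tp)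
              ≤ wdist S (z 0 * pv c ts) (z ip * pv b (j - n₁ - n₂))
                + wdist S (z ip * pv b (j - n₁ - n₂)) (z 0 * pv c tp) :=
            wdist_triangle S hgen _ _ _
          have h3 : wdist S (z ip * pv b (j - n₁ - n₂)) (z 0 * pv c tp) ≤ K * D := by
            have hrb : j - n₁ - n₂ ≤ b.length := by
              rw [← hn₃]
              omega
            have e1 : z 0 * pv c tp = z ip * pv b b.length := by
              rw [pv_length, hbp]
              group
            rw [e1, wdist_mul_left, geodesic_segment S hbw hrb (le_refl b.length)]
            rw [← hn₃]
            omega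
          have h7 : T = K * D + (K * (K * D) - K * D + D) + (K * D - D) := by
            rw [hT]
            have e2 : K * D ≤ K * (K * D) := by
              have : 1 ≤ K := hK1
              calc K * D = 1 * (K * D) := by ring
                _ ≤ K * (K * D) := Nat.mul_le_mul_right _ hK1
            have e3 : D ≤ K * D := by
              calc D = 1 * D := by ring
                _ ≤ K * D := Nat.mul_le_mul_right _ hK1
            have e4 : K * (K+1) * D = K * (K * D) + K * D := by ring
            omega
          omega
  -- apply log-stability to the detour chain
  set k := Nat.log 2 Ntot + 1 with hk
  have hNt2 : Ntot ≤ 2 ^ k := le_of_lt (Nat.lt_pow_succ_log_self (by norm_num) Ntot)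
  obtain ⟨hseg_geo, hseg_prod, hseg_len⟩ := geodesic_subword hc htmtp htp_len
  have hcseg0 : ζ 0 * ((c.drop tm).take (tp - tm)).prod = ζ Ntot := by
    rw [hζ0, hζNtot, hseg_prod]
    group
  have hts_param : ζ 0 * pv ((c.drop tm).take (tp - tm)) (ts - tm) = z 0 * pv c ts := by
    rw [hζ0, pv_subword (show ts - tm ≤ tp - tm by omega)]
    rw [show tm + (ts - tm) = ts from by omega]
    group
  obtain ⟨jj, hjj, hjjd⟩ := log_stability hgen hslim hK κ' k Ntot hNt2 ζ hζstep
    ((c.drop tm).take (tp - tm)) hseg_geo hcseg0 (ts - tm) (by rw [hseg_len]; omega)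
  rw [hts_param] at hjjd
  have hDb : D ≤ 2 * Δ * k + K * κ' := le_trans (hlower jj hjj) hjjd
  -- bound the total length of the detour chain
  have hwdtmtp : wdist S (z 0 * pv c tm) (z 0 * pv c tp) = tp - tm := by
    rw [wdist_mul_left, geodesic_segment S hc htmtp htp_len]
  have htptm2T : tp - tm ≤ 2 * T := by omega
  have hn₂bound : n₂ ≤ lam * (K * D + 2 * (K * T) + D) := by
    rcases le_or_gt im ip with hord | hord
    · have h1 : ip - im ≤ lam * wdist S (z im) (z ip) := hlow im ip hord hipN
      have h2 : wdist S (z im) (z ip) ≤ wdist S (z im) (z 0 * pv c tm)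
          + wdist S (z 0 * pv c tm) (z 0 * pv c tp)
          + wdist S (z 0 * pv c tp) (z ip) := by
        have t1 := wdist_triangle S hgen (z im) (z 0 * pv c tm) (z ip)
        have t2 := wdist_triangle S hgen (z 0 * pv c tm) (z 0 * pv c tp) (z ip)
        omega
      have h3 : wdist S (z im) (z 0 * pv c tm) ≤ K * D := by
        have h := wdist_symm_le S hK (z 0 * pv c tm) (z im)
        have h' := Nat.mul_le_mul_left K hm
        omega
      have h4 : wdist S (z im) (z ip) ≤ K * D + 2 * (K * T) + D := by
        have e1 : T ≤ K * T := by
          calc T = 1 * T := by ring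
            _ ≤ K * T := Nat.mul_le_mul_right _ hK1
        omega
      have h5 := Nat.mul_le_mul_left lam h4
      have hn₂eq : n₂ = ip - im := by rw [hn₂]; omega
      omega
    · have h1 : im - ip ≤ lam * wdist S (z ip) (z im) := hlow ip im (by omega) himN
      have h2 : wdist S (z ip) (z im) ≤ wdist S (z ip) (z 0 * pv c tp)
          + wdist S (z 0 * pv c tp) (z 0 * pv c tm)
          + wdist S (z 0 * pv c tm) (z im) := by
        have t1 := wdist_triangle S hgen (z ip) (z 0 * pv c tp) (z im)
        have t2 := wdist_triangle S hgen (z 0 * pv c tp) (z 0 * pv c tm) (z im)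
        omega
      have h3 : wdist S (z ip) (z 0 * pv c tp) ≤ K * D := by
        have h := wdist_symm_le S hK (z 0 * pv c tp) (z ip)
        have h' := Nat.mul_le_mul_left K hp
        omega
      have h3' : wdist S (z 0 * pv c tp) (z 0 * pv c tm) ≤ K * (tp - tm) := by
        have h := wdist_symm_le S hK (z 0 * pv c tm) (z 0 * pv c tp)
        rw [hwdtmtp] at h
        exact h
      have h4 : wdist S (z ip) (z im) ≤ K * D + 2 * (K * T) + D := by
        have e1 : K * (tp - tm) ≤ K * (2 * T) := Nat.mul_le_mul_left K htptm2T
        have e2 : K * (2 * T) = 2 * (K * T) := by ring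
        omega
      have h5 := Nat.mul_le_mul_left lam h4
      have hn₂eq : n₂ = im - ip := by rw [hn₂]; omega
      omega
  have hNtC : Ntot ≤ C₂ * D := by
    have e1 : C₂ * D = D + K * D + lam * (K * D + 2 * (K * T) + D) := by
      rw [hC₂, hT]
      ring
    omega
  have hlog : Nat.log 2 Ntot ≤ Nat.log 2 (C₂ * D) := Nat.log_mono_right hNtC
  have hfinal : D ≤ a₀ * Nat.log 2 (C₂ * D) + a₀ := by
    have e1 : 2 * Δ * k + K * κ' = 2 * Δ * Nat.log 2 Ntot + a₀ := by
      rw [hk, ha₀]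
      ring
    have e2 : 2 * Δ * Nat.log 2 Ntot ≤ 2 * Δ * Nat.log 2 (C₂ * D) :=
      Nat.mul_le_mul_left _ hlog
    have e3 : 2 * Δ * Nat.log 2 (C₂ * D) ≤ a₀ * Nat.log 2 (C₂ * D) :=
      Nat.mul_le_mul_right _ (by rw [ha₀]; omega)
    omega
  exact hM₁ D hfinal

end Morse

/-! ### Core support lemmas -/

section CoreSupport

variable {S X : Set G}

lemma geodesic_of_append {a b : List G} (hu : IsGeodesicWord X (a ++ b)) :
    IsGeodesicWord X a ∧ IsGeodesicWord X b := by
  have hwa : IsWord X a := fun x hx => hu.1 x (List.mem_append.mpr (Or.inl hx))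
  have hwb : IsWord X b := fun x hx => hu.1 x (List.mem_append.mpr (Or.inr hx))
  constructor
  · refine ⟨hwa, le_antisymm ?_ (wlen_le_length X hwa)⟩
    by_contra hlt
    push_neg at hlt
    obtain ⟨a', ha'w, ha'p, ha'l⟩ := Nat.sInf_mem
      (⟨a.length, a, hwa, rfl, rfl⟩ :
        {n | ∃ w : List G, IsWord X w ∧ w.prod = a.prod ∧ w.length = n}.Nonempty)
    have hword : IsWord X (a' ++ b) := by
      intro x hx
      rcases List.mem_append.mp hx with h | h
      · exact ha'w x h
      · exact hwb x h
    have h1 := wlen_le_length X hword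
    rw [List.prod_append, ha'p, ← List.prod_append] at h1
    have h3 := hu.2
    have e : a'.length = wlen X a.prod := ha'l
    have h4 : (a' ++ b).length = a'.length + b.length := List.length_append
    have h5 : (a ++ b).length = a.length + b.length := List.length_append
    omega
  · refine ⟨hwb, le_antisymm ?_ (wlen_le_length X hwb)⟩
    by_contra hlt
    push_neg at hlt
    obtain ⟨b', hb'w, hb'p, hb'l⟩ := Nat.sInf_mem
      (⟨b.length, b, hwb, rfl, rfl⟩ :
        {n | ∃ w : List G, IsWord X w ∧ w.prod = b.prod ∧ w.length = n}.Nonempty)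
    have hword : IsWord X (a ++ b') := by
      intro x hx
      rcases List.mem_append.mp hx with h | h
      · exact hwa x h
      · exact hb'w x h
    have h1 := wlen_le_length X hword
    rw [List.prod_append, hb'p, ← List.prod_append] at h1
    have h3 := hu.2
    have e : b'.length = wlen X b.prod := hb'l
    have h4 : (a ++ b').length = a.length + b'.length := List.length_append
    have h5 : (a ++ b).length = a.length + b.length := List.length_append
    omega

lemma pv_append_left {y₁ y₂ : List G} {i : ℕ} (hi : i ≤ y₁.length) :
    pv (y₁ ++ y₂) i = pv y₁ i := by
  unfold pv
  rw [List.take_append_of_le_length hi]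

lemma pv_append_right (y₁ y₂ : List G) (i : ℕ) :
    pv (y₁ ++ y₂) (y₁.length + i) = y₁.prod * pv y₂ i := by
  unfold pv
  rw [List.take_add, List.take_left, List.prod_append]
  congr 2
  rw [List.drop_left]

/-- Pigeonhole: a function on `{0,…,n}` into a finite set admits a collision. -/
lemma exists_collision {α : Type*} (B : Set α) (hB : B.Finite) (f : ℕ → α)
    (n : ℕ) (hf : ∀ q, q ≤ n → f q ∈ B) (hn : B.ncard < n + 1) :
    ∃ q q', q < q' ∧ q' ≤ n ∧ f q = f q' := by
  classical
  have hmap : ∀ q ∈ Finset.range (n + 1), f q ∈ hB.toFinset := by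
    intro q hq
    rw [Set.Finite.mem_toFinset]
    exact hf q (by have := Finset.mem_range.mp hq; omega)
  have hcard : hB.toFinset.card < (Finset.range (n + 1)).card := by
    rw [Finset.card_range]
    rwa [Set.ncard_eq_toFinset_card B hB] at hn
  obtain ⟨q, hq, q', hq', hne, heq⟩ :=
    Finset.exists_ne_map_eq_of_card_lt_of_maps_to hcard hmap
  rcases Nat.lt_or_ge q q' with h | h
  · exact ⟨q, q', h, by have := Finset.mem_range.mp hq'; omega, heq⟩
  · have : q' < q := by omega
    exact ⟨q', q, this, by have := Finset.mem_range.mp hq; omega, heq.symm⟩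

/-- An `S`-geodesic stays uniformly close to any `X`-geodesic word with the same
endpoints. -/
lemma geodesic_near_word (hgenS : Generates S) (hSfin : S.Finite)
    (hgenX : Generates X) (hXfin : X.Finite) {Δ K : ℕ} (hslim : NSlim S Δ)
    (hK : ∀ g : G, wlen S g⁻¹ ≤ K * wlen S g) (hK1 : 1 ≤ K) :
    ∃ M₀ : ℕ, ∀ y : List G, IsGeodesicWord X y → ∀ β : List G,
      IsGeodesicWord S β → β.prod = y.prod →
      ∀ t, t ≤ β.length → ∃ i ≤ y.length, wdist S (pv β t) (pv y i) ≤ M₀ := by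
  obtain ⟨KXS, hKXS⟩ := exists_compare X hXfin hgenX S hgenS
  obtain ⟨KSX, hKSX⟩ := exists_compare S hSfin hgenS X hgenX
  obtain ⟨M₀, hM₀⟩ := morse_lemma hgenS hslim hK hK1 KXS KSX
  refine ⟨M₀, ?_⟩
  intro y hy β hβ hprod t ht
  have hz0 : pv y 0 = (1 : G) := pv_zero y
  have hsteps : ∀ i, i < y.length → wdist S (pv y i) (pv y (i + 1)) ≤ KXS := by
    intro i hi
    have h1 : wdist S (pv y i) (pv y (i+1)) ≤ KXS * wdist X (pv y i) (pv y (i+1)) :=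
      hKXS _
    rw [geodesic_segment X hy (by omega : i ≤ i + 1) (by omega)] at h1
    have e : i + 1 - i = 1 := by omega
    rw [e, mul_one] at h1
    exact h1
  have hlow : ∀ i j, i ≤ j → j ≤ y.length →
      j - i ≤ KSX * wdist S (pv y i) (pv y j) := by
    intro i j hij hj
    have h1 : wdist X (pv y i) (pv y j) ≤ KSX * wdist S (pv y i) (pv y j) := hKSX _
    rw [geodesic_segment X hy hij hj] at h1
    exact h1
  have hend : pv y 0 * β.prod = pv y y.length := by
    rw [hz0, one_mul, pv_length, hprod]
  obtain ⟨i, hiN, hid⟩ := hM₀ y.length (fun i => pv y i) hsteps hlow β hβ hend t ht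
  rw [hz0, one_mul] at hid
  exact ⟨i, hiN, hid⟩

/-- An `S`-geodesic joining the endpoints of a concatenation of two `X`-geodesic
words stays uniformly close to the vertex set of the concatenated path. -/
lemma split_near (hgenS : Generates S) (hSfin : S.Finite)
    (hgenX : Generates X) (hXfin : X.Finite) {Δ K : ℕ} (hslim : NSlim S Δ)
    (hK : ∀ g : G, wlen S g⁻¹ ≤ K * wlen S g) (hK1 : 1 ≤ K) :
    ∃ M₂ : ℕ, ∀ y₁ y₂ : List G, IsGeodesicWord X y₁ → IsGeodesicWord X y₂ →
      ∀ β : List G, IsGeodesicWord S β → β.prod = (y₁ ++ y₂).prod →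
      ∀ t, t ≤ β.length →
        ∃ i ≤ (y₁ ++ y₂).length, wdist S (pv β t) (pv (y₁ ++ y₂) i) ≤ M₂ := by
  obtain ⟨M₀, hM₀⟩ := geodesic_near_word hgenS hSfin hgenX hXfin hslim hK hK1
  refine ⟨M₀ + 2 * Δ, ?_⟩
  intro y₁ y₂ hy₁ hy₂ β hβ hprod t ht
  obtain ⟨γ₁, hγ₁, hγ₁p⟩ := exists_geodesic_word hgenS y₁.prod
  obtain ⟨γ₂, hγ₂, hγ₂p⟩ := exists_geodesic_word hgenS y₂.prod
  obtain ⟨q, hq, hqp⟩ := exists_geodesic_word hgenS y₂.prod⁻¹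
  have hpq : β.prod * q.prod = γ₁.prod := by
    rw [hprod, hqp, hγ₁p, List.prod_append]
    group
  obtain ⟨y, hyd, hy⟩ := hslim 1 β q γ₁ hβ hq hγ₁ hpq t ht
  rw [one_mul] at hyd
  rcases hy with ⟨s, hs, rfl⟩ | ⟨s, hs, rfl⟩
  · -- on the reversed side: transfer through the bigon, then Morse on `y₂`
    obtain ⟨t', ht', hb⟩ := nslim_bigon S hslim hγ₂ hq (by rw [hqp, hγ₂p]) hs
    obtain ⟨i, hiN, hid⟩ := hM₀ y₂ hy₂ γ₂ hγ₂ hγ₂p t' ht'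
    refine ⟨y₁.length + i, ?_, ?_⟩
    · rw [List.length_append]
      omega
    · have e1 : (1 : G) * β.prod * pv q s = y₁.prod * (γ₂.prod * pv q s) := by
        rw [hprod, List.prod_append, hγ₂p]
        group
      have e2 : wdist S (y₁.prod * (γ₂.prod * pv q s)) (y₁.prod * pv γ₂ t') ≤ Δ := by
        rw [wdist_mul_left]
        exact hb
      have e3 : wdist S (y₁.prod * pv γ₂ t') (y₁.prod * pv y₂ i) ≤ M₀ := by
        rw [wdist_mul_left]
        exact hid
      rw [pv_append_right]
      calc wdist S (pv β t) (y₁.prod * pv y₂ i)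
          ≤ wdist S (pv β t) (1 * β.prod * pv q s)
            + wdist S (1 * β.prod * pv q s) (y₁.prod * pv y₂ i) :=
            wdist_triangle S hgenS _ _ _
        _ ≤ Δ + (Δ + M₀) := by
            gcongr
            rw [e1]
            calc wdist S (y₁.prod * (γ₂.prod * pv q s)) (y₁.prod * pv y₂ i)
                ≤ wdist S (y₁.prod * (γ₂.prod * pv q s)) (y₁.prod * pv γ₂ t')
                  + wdist S (y₁.prod * pv γ₂ t') (y₁.prod * pv y₂ i) :=
                  wdist_triangle S hgenS _ _ _
              _ ≤ Δ + M₀ := by gcongr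
        _ ≤ M₀ + 2 * Δ := by omega
  · -- on the first side: Morse on `y₁`
    obtain ⟨i, hiN, hid⟩ := hM₀ y₁ hy₁ γ₁ hγ₁ hγ₁p s hs
    refine ⟨i, ?_, ?_⟩
    · rw [List.length_append]
      omega
    · rw [pv_append_left hiN]
      have e1 : (1:G) * pv γ₁ s = pv γ₁ s := one_mul _
      calc wdist S (pv β t) (pv y₁ i)
          ≤ wdist S (pv β t) (1 * pv γ₁ s) + wdist S (1 * pv γ₁ s) (pv y₁ i) :=
            wdist_triangle S hgenS _ _ _
        _ ≤ Δ + M₀ := by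
            gcongr
            rw [e1]
            exact hid
        _ ≤ M₀ + 2 * Δ := by omega

end CoreSupport

/-! ### The core bounded-conjugator lemma -/

section Core

variable {S X : Set G}

lemma bounded_pc_conjugator (hgenS : Generates S) (hSfin : S.Finite)
    (hgenX : Generates X) (hXfin : X.Finite) {Δ K : ℕ} (hslim : NSlim S Δ)
    (hK : ∀ g : G, wlen S g⁻¹ ≤ K * wlen S g) (hK1 : 1 ≤ K) :
    ∃ C₀ : ℕ, ∀ u v : List G, IsGeodesicWord X u → IsGeodesicWord X v →
      IsConj u.prod v.prod → ∃ x : G, IsPCConjugator u v x ∧ wlen S x ≤ C₀ := by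
  classical
  obtain ⟨M₂, hM₂⟩ := split_near hgenS hSfin hgenX hXfin hslim hK hK1
  set C₇ : ℕ := Δ + K * Δ with hC₇
  set C₆ : ℕ := Δ + M₂ + 1 with hC₆
  set Cβ : ℕ := K * (Δ + M₂) + K * C₇ with hCβ
  set Cσ : ℕ := Cβ + 1 + 2 * Δ with hCσ
  set CA : ℕ := Cσ + 2 * K * Δ + K * (2 * Δ) with hCA
  set CB : ℕ := C₇ + 2 * Δ with hCB
  set gap : ℕ := 2 * K * Δ + 2 * Δ + 1 with hgap
  have hBfin : ({g : G | wlen S g ≤ CB} ×ˢ {g : G | wlen S g ≤ CA}).Finite :=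
    (ball_finite S hSfin hgenS CB).prod (ball_finite S hSfin hgenS CA)
  set Np : ℕ := ({g : G | wlen S g ≤ CB} ×ˢ {g : G | wlen S g ≤ CA}).ncard with hNp
  refine ⟨Cβ + 1 + (Np + 1) * gap + C₆ + 2, ?_⟩
  intro u v hu hv hconj
  have hWne : {n | ∃ x : G, IsPCConjugator u v x ∧ wlen S x = n}.Nonempty := by
    obtain ⟨x, hx⟩ := pc_exists hconj
    exact ⟨wlen S x, x, hx, rfl⟩
  set m := sInf {n | ∃ x : G, IsPCConjugator u v x ∧ wlen S x = n} with hm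
  obtain ⟨w, hwPC, hwlen⟩ := Nat.sInf_mem hWne
  have hmin : ∀ x : G, IsPCConjugator u v x → m ≤ wlen S x := by
    intro x hx
    exact Nat.sInf_le ⟨x, hx, rfl⟩
  refine ⟨w, hwPC, ?_⟩
  rw [hwlen]
  by_contra hbig
  push_neg at hbig
  obtain ⟨u', v', hu', hv', hweq⟩ := hwPC
  set a := u'.prod with ha
  set b := v'.prod with hbdef
  -- split the cyclic permutations into two geodesic pieces
  obtain ⟨a₁, a₂, husplit, hu'split⟩ := isCyclicPerm_iff.mp hu'
  obtain ⟨b₁, b₂, hvsplit, hv'split⟩ := isCyclicPerm_iff.mp hv'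
  have hua : IsGeodesicWord X a₂ ∧ IsGeodesicWord X a₁ := by
    have := geodesic_of_append (husplit ▸ hu)
    exact ⟨this.2, this.1⟩
  have hvb : IsGeodesicWord X b₂ ∧ IsGeodesicWord X b₁ := by
    have := geodesic_of_append (hvsplit ▸ hv)
    exact ⟨this.2, this.1⟩
  -- the family of PC-conjugators and its minimality
  have hfam : ∀ (i j : ℕ) (k l : ℤ),
      m ≤ wlen S ((pv v' i)⁻¹ * b ^ k * w * a ^ l * pv u' j) := by
    intro i j k l
    exact hmin _ (pc_family hu' hv' hweq i j k l)
  have hF1 : ∀ i : ℕ, m ≤ wlen S ((pv v' i)⁻¹ * w) := by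
    intro i
    have := hfam i 0 0 0
    simpa [pv_zero] using this
  have hF2 : ∀ j : ℕ, m ≤ wlen S (w * pv u' j) := by
    intro j
    have := hfam 0 j 0 0
    simpa [pv_zero] using this
  have hF3 : m ≤ wlen S (b * w) := by
    have := hfam 0 0 1 0
    simpa [pv_zero] using this
  -- geodesic words
  obtain ⟨ω, hω, hωp⟩ := exists_geodesic_word hgenS w
  obtain ⟨ωr, hωr, hωrp⟩ := exists_geodesic_word hgenS w⁻¹
  obtain ⟨γ, hγ, hγp⟩ := exists_geodesic_word hgenS (b * w)
  obtain ⟨β, hβ, hβp⟩ := exists_geodesic_word hgenS b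
  obtain ⟨al, hal, halp⟩ := exists_geodesic_word hgenS a
  have hωlen : ω.length = m := by rw [hω.2, hωp, hwlen]
  set L := γ.length with hL
  have hLlen : L = wlen S (b * w) := by rw [hL, hγ.2, hγp]
  have hLm : m ≤ L := by rw [hLlen]; exact hF3
  have hωend : pv ω ω.length = w := by rw [pv_length, hωp]
  have hγend : pv γ L = b * w := by rw [hL, pv_length, hγp]
  -- (E1) exclusion along the v'-path
  have hE1 : ∀ t, t ≤ m → ∀ i : ℕ, t ≤ wdist S (pv v' i) (pv ω t) := by
    intro t ht i
    have h1 : wdist S (pv v' i) w ≤ wdist S (pv v' i) (pv ω t) + wdist S (pv ω t) w :=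
      wdist_triangle S hgenS _ _ _
    have h2 : wdist S (pv ω t) w = m - t := by
      have := geodesic_segment S hω (show t ≤ ω.length by omega) (le_refl ω.length)
      rw [hωend] at this
      rw [this, hωlen]
    have h3 : m ≤ wdist S (pv v' i) w := hF1 i
    omega
  -- (E2) exclusion along the u'-path
  have hE2 : ∀ t, t ≤ m → ∀ j : ℕ, m - t ≤ wdist S (pv ω t) (w * pv u' j) := by
    intro t ht j
    have h1 : wdist S 1 (w * pv u' j) ≤ wdist S 1 (pv ω t)
        + wdist S (pv ω t) (w * pv u' j) := wdist_triangle S hgenS _ _ _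
    have h2 : wdist S 1 (pv ω t) = t :=
      geodesic_pv_dist_from_one S hω (by omega)
    have h3 : m ≤ wdist S 1 (w * pv u' j) := by
      rw [wlen_eq_wdist_one] at *
      exact hF2 j
    omega
  -- (W3a) synchronisation of ω and γ
  have hW3a : ∀ t, t + C₆ ≤ m → wdist S (pv ω t) (pv γ t) ≤ C₇ := by
    intro t htC
    have htm : t ≤ m := by omega
    obtain ⟨y, hyd, hy⟩ := hslim 1 ω al γ hω hal hγ
      (by rw [hωp, halp, hγp]; exact hweq) t (by omega)
    rw [one_mul] at hyd
    rcases hy with ⟨s, hs, rfl⟩ | ⟨s, hs, rfl⟩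
    · -- close to the a-side: contradiction via (E2)
      exfalso
      obtain ⟨j, hjle, hjd⟩ := hM₂ a₂ a₁ hua.1 hua.2 al hal
        (by rw [halp, ha, hu'split]) s hs
      rw [← hu'split] at hjd
      have h1 : wdist S (pv ω t) (w * pv u' j)
          ≤ wdist S (pv ω t) (1 * ω.prod * pv al s)
            + wdist S (1 * ω.prod * pv al s) (w * pv u' j) := wdist_triangle S hgenS _ _ _
      have h2 : wdist S (1 * ω.prod * pv al s) (w * pv u' j) ≤ M₂ := by
        have e1 : (1 : G) * ω.prod * pv al s = w * pv al s := by rw [hωp]; group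
        rw [e1, wdist_mul_left]
        exact hjd
      have h3 := hE2 t htm j
      omega
    · -- close to γ: synchronise the parameter
      rw [one_mul] at *
      have hsL : s ≤ L := hs
      have h1 : wdist S 1 (pv γ s) = s := geodesic_pv_dist_from_one S hγ hs
      have h2 : wdist S 1 (pv ω t) = t := geodesic_pv_dist_from_one S hω (by omega)
      have h3 : wdist S 1 (pv γ s) ≤ wdist S 1 (pv ω t) + wdist S (pv ω t) (pv γ s) :=
        wdist_triangle S hgenS _ _ _
      have h4 : wdist S 1 (pv ω t) ≤ wdist S 1 (pv γ s) + wdist S (pv γ s) (pv ω t) :=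
        wdist_triangle S hgenS _ _ _
      have h5 : wdist S (pv γ s) (pv ω t) ≤ K * wdist S (pv ω t) (pv γ s) :=
        wdist_symm_le S hK _ _
      have htL : t ≤ L := by omega
      rcases le_or_gt s t with hst | hst
      · have h6 : wdist S (pv γ s) (pv γ t) = t - s := geodesic_segment S hγ hst htL
        have h7 : wdist S (pv ω t) (pv γ t) ≤ wdist S (pv ω t) (pv γ s)
            + wdist S (pv γ s) (pv γ t) := wdist_triangle S hgenS _ _ _
        have h8 : K * wdist S (pv ω t) (pv γ s) ≤ K * Δ := Nat.mul_le_mul_left K hyd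
        omega
      · have h6 : wdist S (pv γ t) (pv γ s) = s - t :=
          geodesic_segment S hγ (by omega) hsL
        have h7 : wdist S (pv γ s) (pv γ t) ≤ K * wdist S (pv γ t) (pv γ s) :=
          wdist_symm_le S hK _ _
        rw [h6] at h7
        have h8 : wdist S (pv ω t) (pv γ t) ≤ wdist S (pv ω t) (pv γ s)
            + wdist S (pv γ s) (pv γ t) := wdist_triangle S hgenS _ _ _
        have h9 : K * (s - t) ≤ K * Δ := Nat.mul_le_mul_left K (by omega)
        omega
  -- (W3b) points of γ are close to the v'-path or to the translate b·ω
  have hW3b : ∀ s, s ≤ L → (∃ i : ℕ, wdist S (pv γ s) (pv v' i) ≤ Δ + M₂) ∨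
      (∃ t' ≤ m, wdist S (pv γ s) (b * pv ω t') ≤ 2 * Δ) := by
    intro s hs
    obtain ⟨y, hyd, hy⟩ := hslim 1 γ ωr β hγ hωr hβ
      (by rw [hγp, hωrp, hβp]; group) s hs
    rw [one_mul] at hyd
    rcases hy with ⟨r, hr, rfl⟩ | ⟨r, hr, rfl⟩
    · -- close to the reversed ω-side: transfer through the bigon
      right
      obtain ⟨t', ht', hb2⟩ := nslim_bigon S hslim hω hωr (by rw [hωrp, hωp]) hr
      refine ⟨t', by omega, ?_⟩
      have e1 : (1:G) * γ.prod * pv ωr r = b * (ω.prod * pv ωr r) := by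
        rw [hγp, hωp]; group
      have e2 : wdist S (b * (ω.prod * pv ωr r)) (b * pv ω t') ≤ Δ := by
        rw [wdist_mul_left]
        exact hb2
      calc wdist S (pv γ s) (b * pv ω t')
          ≤ wdist S (pv γ s) (1 * γ.prod * pv ωr r)
            + wdist S (1 * γ.prod * pv ωr r) (b * pv ω t') := wdist_triangle S hgenS _ _ _
        _ ≤ Δ + Δ := by
            gcongr
            rw [e1]
            exact e2
        _ = 2 * Δ := by ring
    · -- close to the β-side: use the splitting of v'
      left
      obtain ⟨i, hile, hid⟩ := hM₂ b₂ b₁ hvb.1 hvb.2 β hβ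
        (by rw [hβp, hbdef, hv'split]) r hr
      rw [← hv'split] at hid
      refine ⟨i, ?_⟩
      calc wdist S (pv γ s) (pv v' i)
          ≤ wdist S (pv γ s) (1 * pv β r) + wdist S (1 * pv β r) (pv v' i) :=
            wdist_triangle S hgenS _ _ _
        _ ≤ Δ + M₂ := by
            gcongr
            rw [one_mul]
            exact hid
  -- exclusion of the β-case in the middle window
  have hExcl : ∀ s, Cβ < s → s + C₆ ≤ m →
      ∃ t' ≤ m, wdist S (pv γ s) (b * pv ω t') ≤ 2 * Δ := by
    intro s hsC hsm
    rcases hW3b s (by omega) with ⟨i, hi⟩ | h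
    · exfalso
      have h1 := hE1 s (by omega) i
      have h2 : wdist S (pv v' i) (pv γ s) ≤ K * (Δ + M₂) :=
        le_trans (wdist_symm_le S hK _ _) (Nat.mul_le_mul_left K hi)
      have h3 := hW3a s (by omega)
      have h4 : wdist S (pv γ s) (pv ω s) ≤ K * C₇ :=
        le_trans (wdist_symm_le S hK _ _) (Nat.mul_le_mul_left K h3)
      have h5 : wdist S (pv v' i) (pv ω s) ≤ wdist S (pv v' i) (pv γ s)
          + wdist S (pv γ s) (pv ω s) := wdist_triangle S hgenS _ _ _
      rw [hCβ] at hsC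
      omega
    · exact h
  -- parameter estimates for the Q-case
  have hPP : ∀ s t', s ≤ L → t' ≤ m → wdist S (pv γ s) (b * pv ω t') ≤ 2 * Δ →
      L + t' ≤ s + m + 2 * Δ ∧ s + m ≤ L + t' + K * (2 * Δ) := by
    intro s t' hsL htm hd
    have h1 : wdist S (pv γ s) (pv γ L) = L - s := geodesic_segment S hγ hsL (le_refl L)
    have h2 : wdist S (b * pv ω t') (b * pv ω ω.length) = m - t' := by
      rw [wdist_mul_left, geodesic_segment S hω (by omega) (le_refl ω.length), hωlen]
    have h3 : b * pv ω ω.length = pv γ L := by rw [hωend, hγend]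
    have h4 : wdist S (pv γ s) (pv γ L) ≤ wdist S (pv γ s) (b * pv ω t')
        + wdist S (b * pv ω t') (pv γ L) := wdist_triangle S hgenS _ _ _
    have h5 : wdist S (b * pv ω t') (pv γ L) = m - t' := by rw [← h3]; exact h2
    have h6 : wdist S (b * pv ω t') (pv γ L) ≤ wdist S (b * pv ω t') (pv γ s)
        + wdist S (pv γ s) (pv γ L) := wdist_triangle S hgenS _ _ _
    have h7 : wdist S (b * pv ω t') (pv γ s) ≤ K * (2 * Δ) :=
      le_trans (wdist_symm_le S hK _ _) (Nat.mul_le_mul_left K hd)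
    omega
  -- sampling and pigeonhole
  set sq : ℕ → ℕ := fun q => Cβ + 1 + q * gap with hsq
  have hsqwin : ∀ q, q ≤ Np → Cβ < sq q ∧ sq q + C₆ ≤ m := by
    intro q hq
    constructor
    · simp only [hsq]
      omega
    · simp only [hsq]
      have h1 : q * gap ≤ Np * gap := Nat.mul_le_mul_right gap hq
      have h2 : Np * gap + gap = (Np + 1) * gap := by ring
      omega
  have hsel : ∀ q : ℕ, ∃ t' : ℕ, q ≤ Np →
      t' ≤ m ∧ wdist S (pv γ (sq q)) (b * pv ω t') ≤ 2 * Δ := by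
    intro q
    by_cases hq : q ≤ Np
    · obtain ⟨t', ht', hd⟩ := hExcl (sq q) (hsqwin q hq).1 (hsqwin q hq).2
      exact ⟨t', fun _ => ⟨ht', hd⟩⟩
    · exact ⟨0, fun h => absurd h hq⟩
  choose tf htf using hsel
  have ebridge : K * (2 * Δ) = 2 * K * Δ := by ring
  have hσ : L ≤ m + Cσ := by
    obtain ⟨ht0, hd0⟩ := htf 0 (Nat.zero_le Np)
    have hsq0 : sq 0 = Cβ + 1 := by simp [hsq]
    obtain ⟨hP1, hP2⟩ := hPP (sq 0) (tf 0)
      (by have := (hsqwin 0 (Nat.zero_le Np)).2; omega) ht0 hd0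
    rw [hsq0] at hP1
    rw [hCσ]
    omega
  set f : ℕ → G × G := fun q =>
    ((pv ω (sq q))⁻¹ * (b * pv ω (tf q)), (pv ω (tf q))⁻¹ * pv ω (sq q)) with hf
  have hfmem : ∀ q, q ≤ Np → f q ∈ ({g : G | wlen S g ≤ CB} ×ˢ {g : G | wlen S g ≤ CA}) := by
    intro q hq
    obtain ⟨htm', hd⟩ := htf q hq
    obtain ⟨hw1, hw2⟩ := hsqwin q hq
    have hsm : sq q ≤ m := by omega
    have hsL : sq q ≤ L := by omega
    have hsync := hW3a (sq q) (by omega)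
    constructor
    · -- first coordinate
      show wlen S ((pv ω (sq q))⁻¹ * (b * pv ω (tf q))) ≤ CB
      have h1 : wdist S (pv ω (sq q)) (b * pv ω (tf q))
          ≤ wdist S (pv ω (sq q)) (pv γ (sq q))
            + wdist S (pv γ (sq q)) (b * pv ω (tf q)) := wdist_triangle S hgenS _ _ _
      have : wdist S (pv ω (sq q)) (b * pv ω (tf q)) ≤ CB := by
        rw [hCB]; omega
      exact this
    · -- second coordinate
      show wlen S ((pv ω (tf q))⁻¹ * pv ω (sq q)) ≤ CA
      obtain ⟨hP1, hP2⟩ := hPP (sq q) (tf q) hsL htm' hd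
      rcases le_or_gt (tf q) (sq q) with hts | hts
      · have h1 : wdist S (pv ω (tf q)) (pv ω (sq q)) = sq q - tf q :=
          geodesic_segment S hω hts (by omega)
        have h2 : sq q - tf q ≤ 2 * K * Δ + Cσ := by
          rw [hCσ]
          omega
        show wlen S ((pv ω (tf q))⁻¹ * pv ω (sq q)) ≤ CA
        have h3 : wlen S ((pv ω (tf q))⁻¹ * pv ω (sq q))
            = wdist S (pv ω (tf q)) (pv ω (sq q)) := rfl
        rw [h3, h1, hCA]
        omega
      · have h1 : wdist S (pv ω (sq q)) (pv ω (tf q)) = tf q - sq q :=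
          geodesic_segment S hω (by omega) (by omega)
        have h2 : tf q - sq q ≤ 2 * Δ := by omega
        have h3 : wlen S ((pv ω (tf q))⁻¹ * pv ω (sq q))
            = wdist S (pv ω (tf q)) (pv ω (sq q)) := rfl
        have h4 : wdist S (pv ω (tf q)) (pv ω (sq q))
            ≤ K * wdist S (pv ω (sq q)) (pv ω (tf q)) := wdist_symm_le S hK _ _
        have h5 : K * wdist S (pv ω (sq q)) (pv ω (tf q)) ≤ K * (2 * Δ) := by
          rw [h1]
          exact Nat.mul_le_mul_left K h2
        rw [h3, hCA]
        omega
  obtain ⟨q, q', hqq', hq'N, hfeq⟩ := exists_collision _ hBfin f Np hfmem (by omega)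
  have hqN : q ≤ Np := by omega
  obtain ⟨ht1m, hd1⟩ := htf q hqN
  obtain ⟨ht2m, hd2⟩ := htf q' hq'N
  obtain ⟨hP11, hP12⟩ := hPP (sq q) (tf q) (by have := (hsqwin q hqN).2; omega) ht1m hd1
  obtain ⟨hP21, hP22⟩ := hPP (sq q') (tf q') (by have := (hsqwin q' hq'N).2; omega) ht2m hd2
  have hgapss : sq q + gap ≤ sq q' := by
    simp only [hsq]
    have : q * gap + gap ≤ q' * gap := by
      have h1 : (q + 1) * gap ≤ q' * gap := Nat.mul_le_mul_right gap (by omega)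
      have h2 : (q + 1) * gap = q * gap + gap := by ring
      omega
    omega
  have htorder : tf q < tf q' := by
    rw [hgap] at hgapss
    omega
  -- the two coordinates of the collision
  have hg : (pv ω (sq q))⁻¹ * (b * pv ω (tf q))
      = (pv ω (sq q'))⁻¹ * (b * pv ω (tf q')) := congrArg Prod.fst hfeq
  have hA : (pv ω (tf q))⁻¹ * pv ω (sq q) = (pv ω (tf q'))⁻¹ * pv ω (sq q') :=
    congrArg Prod.snd hfeq
  -- surgery: a strictly shorter PC-conjugator
  set d1 := pv ω (tf q) with hd1def
  set d2 := pv ω (tf q') with hd2def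
  set c1 := pv ω (sq q) with hc1def
  set c2 := pv ω (sq q') with hc2def
  have he1 : c2 * (c1⁻¹ * (b * d1)) = b * d2 := by
    rw [hg]
    group
  have he2 : d2⁻¹ * c2 = d1⁻¹ * c1 := hA.symm
  set x := d1 * d2⁻¹ * w with hx
  have hxPC : IsPCConjugator u v x := by
    refine ⟨u', v', hu', hv', ?_⟩
    rw [← ha, ← hbdef]
    calc x * a = d1 * d2⁻¹ * (w * a) := by rw [hx]; group
      _ = d1 * d2⁻¹ * (b * w) := by rw [hweq]
      _ = d1 * (d2⁻¹ * (b * d2)) * d2⁻¹ * w := by group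
      _ = d1 * (d2⁻¹ * (c2 * (c1⁻¹ * (b * d1)))) * d2⁻¹ * w := by rw [he1]
      _ = d1 * ((d2⁻¹ * c2) * (c1⁻¹ * (b * d1))) * d2⁻¹ * w := by group
      _ = d1 * ((d1⁻¹ * c1) * (c1⁻¹ * (b * d1))) * d2⁻¹ * w := by rw [he2]
      _ = b * x := by rw [hx]; group
  have hxlen : wlen S x ≤ tf q + (m - tf q') := by
    have h1 : wlen S x ≤ wlen S d1 + wlen S (d2⁻¹ * w) := by
      have e : x = d1 * (d2⁻¹ * w) := by rw [hx]; group
      rw [e]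
      exact wlen_mul_le S hgenS _ _
    have h2 : wlen S d1 = tf q := by
      rw [hd1def]
      exact geodesic_wlen_pv S hω (by omega)
    have h3 : wlen S (d2⁻¹ * w) = m - tf q' := by
      have e : wlen S (d2⁻¹ * w) = wdist S d2 w := rfl
      rw [e, hd2def, ← hωend, geodesic_segment S hω (by omega) (le_refl ω.length), hωlen]
    omega
  have := hmin x hxPC
  omega

end Core

/-! ### Assembly -/

lemma pcl_bounded_main (X₀ : Set G) (hfin₀ : X₀.Finite) (hgen₀ : Generates X₀)
    (δ : ℝ) (hδ : 0 ≤ δ) (hhyp : SlimTriangles X₀ δ) :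
    ∀ X : Set G, X.Finite → Generates X → ∃ C : ℕ, ∀ n : ℕ, PCL X n ≤ C := by
  intro X hXfin hgenX
  have hslim : NSlim X₀ ⌊δ⌋₊ := slimTriangles_nslim X₀ hhyp
  obtain ⟨K, hK1, hK⟩ := exists_inv_bound X₀ hfin₀ hgen₀
  obtain ⟨C₀, hC₀⟩ := bounded_pc_conjugator hgen₀ hfin₀ hgenX hXfin hslim hK hK1
  obtain ⟨KSX, hKSX⟩ := exists_compare X₀ hfin₀ hgen₀ X hgenX
  refine ⟨KSX * C₀, fun n => ?_⟩
  apply csSup_le'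
  rintro k ⟨u, v, hu, hv, hconj, hlen, hpair⟩
  rw [← hpair]
  obtain ⟨x, hxPC, hxlen⟩ := hC₀ u v hu hv hconj
  have h1 : PCLpair X u v ≤ wlen X x := Nat.sInf_le ⟨x, hxPC, rfl⟩
  have h2 : wlen X x ≤ KSX * wlen X₀ x := hKSX x
  have h3 : KSX * wlen X₀ x ≤ KSX * C₀ := Nat.mul_le_mul_left KSX hxlen
  omega

/-- **Proposition.** Let `G` be a hyperbolic group (the Cayley graph with respect to
some finite generating set is `δ`-hyperbolic). Then for every finite generating set
`X` there exists a constant `C = C(X,δ)` such that `PCL_{G,X}(n) ≤ C` for all `n`. -/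
theorem pcl_hyperbolic_bounded
    (X₀ : Set G) (hfin₀ : X₀.Finite) (hgen₀ : Generates X₀)
    (δ : ℝ) (hδ : 0 ≤ δ) (hhyp : SlimTriangles X₀ δ) :
    ∀ X : Set G, X.Finite → Generates X → ∃ C : ℕ, ∀ n : ℕ, PCL X n ≤ C :=
  pcl_bounded_main X₀ hfin₀ hgen₀ δ hδ hhyp

end PCLPaper
end

section
/- Let G be a finitely generated group hyperbolic relative to {H_ω}_{ω∈Ω}, with finite generating set X as in the generating-set lemma and S = X ∪ ⋃_ω (H_ω \ {1}). Let u, v be geodesic words on X representing conjugate elements and let w ≡ s_1 s_2 … s_n be a geodesic word on S representing a PC-conjugator for u, v of minimal S-length. In the associated hexagon Q in Γ(G,S) (with two opposite sides labelled w and the other four sides labelled by derived quasi-geodesics of the pieces of the cyclic permutations u', v' with w u' = v' w): (1) if 1 < i < n and the edge labelled s_i on the side from 1 to w is not isolated in Q, then it is connected to the edge labelled s_i on the opposite w-side (a horizontal band); (2) if i = 1 or i = n and the s_i-edge is connected to a component on the opposite w-side, then it is connected to the edge labelled s_i on that side. -/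
/- Common definitions: words over a generating set, word length, geodesic and
quasi-geodesic words, cyclic permutations, PC-conjugators, the (permutation)
conjugacy length functions, hyperbolic Cayley graphs, and relative hyperbolicity. -/

namespace PCLPaper

variable {G : Type*} [Group G]

private lemma wlen_le_length_s16 {S : Set G} {z : List G} (hz : IsWord S z) :
    wlen S z.prod ≤ z.length := Nat.sInf_le ⟨z, hz, rfl, rfl⟩

private lemma cyc_append (p q : List G) : IsCyclicPerm (p ++ q) (q ++ p) :=
  ⟨p.length, by rw [List.drop_left, List.take_left]⟩

private lemma prod_take_drop (w : List G) (l : ℕ) :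
    (w.take l).prod * (w.drop l).prod = w.prod := by
  rw [← List.prod_append, List.take_append_drop]

private lemma prod_take_take (w : List G) {k l : ℕ} (hkl : k ≤ l) :
    (w.take k).prod * ((w.take l).drop k).prod = (w.take l).prod := by
  conv_rhs => rw [← List.take_append_drop k (w.take l)]
  rw [List.prod_append, List.take_take, min_eq_left hkl]

private lemma prod_take_getD {w : List G} {i : ℕ} (h1 : 1 ≤ i) (h2 : i ≤ w.length) :
    (w.take (i-1)).prod * w.getD (i-1) 1 = (w.take i).prod := by
  have hlt : i - 1 < w.length := by omega
  rw [List.getD_eq_getElem w 1 hlt]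
  conv_rhs => rw [show i = (i-1)+1 by omega, List.take_succ, List.getElem?_eq_getElem hlt]
  rw [List.prod_append]
  simp

private lemma seg_prod_mem {K : Subgroup G} {w : List G} {k l : ℕ} (hl : l ≤ w.length)
    (hmem : ∀ j, k ≤ j → j < l → w.getD j 1 ∈ K) : ((w.take l).drop k).prod ∈ K := by
  apply list_prod_mem
  intro x hx
  obtain ⟨j, hj, rfl⟩ := List.getElem_of_mem hx
  have hj' : j < (w.take l).length - k := by simpa using hj
  have hjl : k + j < l := by simp [List.length_take] at hj'; omega
  have hkw : k + j < w.length := by omega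
  rw [List.getElem_drop, List.getElem_take]
  have := hmem (k+j) (by omega) hjl
  rwa [List.getD_eq_getElem w 1 hkw] at this

private lemma derived_prefix {Ω : Type*} {X : Set G} {H : Ω → Subgroup G} {u ud : List G}
    (h : IsDerived X H u ud) (k : ℕ) :
    ∃ pre suf : List G, u = pre ++ suf ∧ (ud.take k).prod = pre.prod := by
  obtain ⟨blocks, hflat, -, -, hmap⟩ := h
  refine ⟨(blocks.take k).flatten, (blocks.drop k).flatten, ?_, ?_⟩
  · rw [← List.flatten_append, List.take_append_drop, hflat]
  · rw [hmap, ← List.map_take, ← List.prod_flatten]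

/-- **Lemma (horizontal bands).** Let `G` be hyperbolic relative to `{H_ω}`, with
`X` as in the generating set lemma and `S = X ∪ ⋃_ω (H_ω \ {1})`. Let
`w ≡ s_1…s_n` be a geodesic word on `S` representing a PC-conjugator of minimal
`S`-length for the geodesic words `u ≡ u₁u₂` and `v ≡ v₁v₂`, with
`w·(u₂u₁) = (v₂v₁)·w`. Consider the hexagon `Q` with two opposite sides labelled
`w` (based at `1` and at `v' = v₂v₁`) and the remaining four sides labelled by the
derived words of `u₁, u₂, v₁, v₂`. Then: (1) for `1 < i < n`, if the edge labelled
`s_i` on the side from `1` to `w` is not isolated in `Q`, it is connected to the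
edge labelled `s_i` on the opposite `w`-side (a horizontal band); (2) for `i = 1`
or `i = n`, if that edge is connected to a component of the opposite `w`-side, then
it is connected to the edge labelled `s_i` of that side. -/
theorem horizontal_bands {Ω : Type*}
    (X : Set G) (H : Ω → Subgroup G) (lam c : ℝ)
    (hgood : GoodGenSet X H lam c) (hrel : RelativelyHyperbolic X H)
    (u₁ u₂ v₁ v₂ : List G)
    (hu : IsGeodesicWord X (u₁ ++ u₂)) (hv : IsGeodesicWord X (v₁ ++ v₂))
    (hconj : IsConj (u₁ ++ u₂).prod (v₁ ++ v₂).prod)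
    (w : List G) (hw : IsGeodesicWord (relGen X H) w)
    (hpc : IsPCConjugator (u₁ ++ u₂) (v₁ ++ v₂) w.prod)
    (hmin : ∀ z : G, IsPCConjugator (u₁ ++ u₂) (v₁ ++ v₂) z →
      wlen (relGen X H) w.prod ≤ wlen (relGen X H) z)
    (heq : w.prod * (u₂ ++ u₁).prod = (v₂ ++ v₁).prod * w.prod)
    (u1d u2d v1d v2d : List G)
    (hu1 : IsDerived X H u₁ u1d) (hu2 : IsDerived X H u₂ u2d)
    (hv1 : IsDerived X H v₁ v1d) (hv2 : IsDerived X H v₂ v2d)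
    (hu1q : IsQuasiGeodesicWord (relGen X H) lam c u1d)
    (hu2q : IsQuasiGeodesicWord (relGen X H) lam c u2d)
    (hv1q : IsQuasiGeodesicWord (relGen X H) lam c v1d)
    (hv2q : IsQuasiGeodesicWord (relGen X H) lam c v2d)
    -- the six sides of the hexagon `Q`, each given with its base vertex
    (sides : Fin 6 → G × List G)
    (hsides : sides = ![((1 : G), w), (w.prod, u2d), (w.prod * u₂.prod, u1d),
      ((v₂ ++ v₁).prod, w), ((1 : G), v2d), (v₂.prod, v1d)])
    (i : ℕ) (hi1 : 1 ≤ i) (hin : i ≤ w.length)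
    (ω : Ω) (hcomp : IsComponent (H ω) w (i - 1) i) :
    -- (1) a non-isolated middle edge lies in a horizontal band
    (1 < i → i < w.length →
      (∃ b : Fin 6, ∃ k l : ℕ, ¬(b = (0 : Fin 6) ∧ k = i - 1 ∧ l = i) ∧
        ConnectedComponents H 1 w (i - 1) i (sides b).1 (sides b).2 k l) →
      ConnectedComponents H 1 w (i - 1) i ((v₂ ++ v₁).prod) w (i - 1) i) ∧
    -- (2) the first and last edges: any connection to the opposite `w`-side is
    -- a horizontal band
    ((i = 1 ∨ i = w.length) →
      ∀ k l : ℕ, ConnectedComponents H 1 w (i - 1) i ((v₂ ++ v₁).prod) w k l →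
        k = i - 1 ∧ l = i) := by
  classical
  obtain ⟨hwS, hwlen⟩ := hw
  have hwordtake : ∀ k, IsWord (relGen X H) (w.take k) :=
    fun k x hx => hwS x (List.take_subset _ _ hx)
  have hworddrop : ∀ k, IsWord (relGen X H) (w.drop k) :=
    fun k x hx => hwS x (List.drop_subset _ _ hx)
  have heq' : w.prod * (u₂.prod * u₁.prod) = (v₂.prod * v₁.prod) * w.prod := by
    simpa only [List.prod_append] using heq
  -- the contradiction machine: a short word spelling a PC-conjugator contradicts
  -- minimality of `w`
  have hcontra : ∀ g : G, IsPCConjugator (u₁ ++ u₂) (v₁ ++ v₂) g →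
      ∀ (pre suf : List G) (x : G), IsWord (relGen X H) pre → IsWord (relGen X H) suf →
      (∃ ω'' : Ω, x ∈ H ω'') → pre.prod * x * suf.prod = g →
      pre.length + suf.length + 1 < w.length → False := by
    intro g hg pre suf x hpreS hsufS hxH hprod hlen
    obtain ⟨ω'', hx⟩ := hxH
    have hle : wlen (relGen X H) g ≤ pre.length + suf.length + 1 := by
      by_cases hx1 : x = 1
      · have hW : IsWord (relGen X H) (pre ++ suf) := by
          intro y hy
          rcases List.mem_append.1 hy with h | h
          · exact hpreS y h
          · exact hsufS y h
        have hg' : (pre ++ suf).prod = g := by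
          rw [List.prod_append, ← hprod, hx1, mul_one]
        have h2 := wlen_le_length_s16 hW
        rw [hg'] at h2
        simp only [List.length_append] at h2
        omega
      · have hxS : x ∈ relGen X H := Or.inr (Set.mem_iUnion.2 ⟨ω'', hx, hx1⟩)
        have hW : IsWord (relGen X H) (pre ++ x :: suf) := by
          intro y hy
          rcases List.mem_append.1 hy with h | h
          · exact hpreS y h
          · rcases List.mem_cons.1 h with rfl | h
            · exact hxS
            · exact hsufS y h
        have hg' : (pre ++ x :: suf).prod = g := by
          rw [List.prod_append, List.prod_cons, ← hprod]
          group
        have h2 := wlen_le_length_s16 hW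
        rw [hg'] at h2
        simp only [List.length_append, List.length_cons] at h2
        omega
    have h1 := hmin g hg
    have : w.length < w.length := by
      calc w.length = wlen (relGen X H) w.prod := hwlen
        _ ≤ wlen (relGen X H) g := h1
        _ ≤ pre.length + suf.length + 1 := hle
        _ < w.length := hlen
    exact absurd this (lt_irrefl _)
  -- connections between the two `w`-sides must be horizontal
  have hband : ∀ V : G,
      IsPCConjugator (u₁ ++ u₂) (v₁ ++ v₂) (V * w.prod) →
      IsPCConjugator (u₁ ++ u₂) (v₁ ++ v₂) (V⁻¹ * w.prod) →
      ∀ k l : ℕ, ConnectedComponents H 1 w (i - 1) i V w k l → k = i - 1 ∧ l = i := by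
    intro V hg1 hg2 k l hconn
    obtain ⟨ω'', hc1, hc2, hmem⟩ := hconn
    rw [one_mul] at hmem
    obtain ⟨hkl, hlen2, hall2, -, -⟩ := hc2
    have hsmem : w.getD (i-1) 1 ∈ H ω'' := hc1.2.2.1 (i-1) le_rfl (by omega)
    rcases lt_trichotomy k (i-1) with hk | hk | hk
    · exfalso
      rcases le_or_gt i l with hl | hl
      · -- overlapping distinct components are impossible
        have h2 : w.getD (i-2) 1 ∈ H ω'' := hall2 (i-2) (by omega) (by omega)
        rcases hc1.2.2.2.1 with h0 | h0
        · omega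
        · exact h0 h2
      · -- shortcut through `V⁻¹ * w`
        refine hcontra (V⁻¹ * w.prod) hg2 (w.take k) (w.drop i)
          (((w.take (i-1)).prod⁻¹ * (V * (w.take k).prod))⁻¹ * w.getD (i-1) 1)
          (hwordtake k) (hworddrop i) ⟨ω'', mul_mem (inv_mem hmem) hsmem⟩ ?_ ?_
        · have h1 := prod_take_getD (w := w) hi1 hin
          have h2 := prod_take_drop w i
          calc (w.take k).prod * (((w.take (i-1)).prod⁻¹ * (V * (w.take k).prod))⁻¹
                  * w.getD (i-1) 1) * (w.drop i).prod
              = V⁻¹ * ((w.take (i-1)).prod * w.getD (i-1) 1 * (w.drop i).prod) := by group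
            _ = V⁻¹ * w.prod := by rw [h1, h2]
        · simp only [List.length_take, List.length_drop]
          omega
    · refine ⟨hk, ?_⟩
      rcases Nat.lt_or_ge i l with hl | hl
      · exfalso
        have h2 : w.getD i 1 ∈ H ω'' := hall2 i (by omega) hl
        rcases hc1.2.2.2.2 with h0 | h0
        · omega
        · exact h0 h2
      · omega
    · exfalso
      have htmem : ((w.take l).drop k).prod ∈ H ω'' := seg_prod_mem hlen2 hall2
      refine hcontra (V * w.prod) hg1 (w.take (i-1)) (w.drop l)
        (((w.take (i-1)).prod⁻¹ * (V * (w.take k).prod)) * ((w.take l).drop k).prod)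
        (hwordtake _) (hworddrop _) ⟨ω'', mul_mem hmem htmem⟩ ?_ ?_
      · have h1 := prod_take_take w (le_of_lt hkl)
        have h2 := prod_take_drop w l
        calc (w.take (i-1)).prod * ((w.take (i-1)).prod⁻¹ * (V * (w.take k).prod)
                * ((w.take l).drop k).prod) * (w.drop l).prod
            = V * ((w.take k).prod * ((w.take l).drop k).prod * (w.drop l).prod) := by group
          _ = V * w.prod := by rw [h1, h2]
      · simp only [List.length_take, List.length_drop]
        omega
  have hgv1 : IsPCConjugator (u₁ ++ u₂) (v₁ ++ v₂) ((v₂ ++ v₁).prod * w.prod) :=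
    ⟨u₂ ++ u₁, v₂ ++ v₁, cyc_append u₁ u₂, cyc_append v₁ v₂, by rw [mul_assoc, heq]⟩
  have hgv2 : IsPCConjugator (u₁ ++ u₂) (v₁ ++ v₂) (((v₂ ++ v₁).prod)⁻¹ * w.prod) :=
    ⟨u₂ ++ u₁, v₂ ++ v₁, cyc_append u₁ u₂, cyc_append v₁ v₂, by
      rw [mul_assoc, heq]; group⟩
  constructor
  · -- part (1)
    intro hi2 hin' hex
    obtain ⟨b, k, l, hne, hconn⟩ := hex
    subst hsides
    fin_cases b
    · -- side 0 : the `w`-side from `1`, distinct connected components of a geodesic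
      exfalso
      replace hconn : ConnectedComponents H 1 w (i - 1) i (1 : G) w k l := hconn
      have hne' : ¬(k = i - 1 ∧ l = i) := fun h => hne ⟨rfl, h.1, h.2⟩
      have hpc1 : IsPCConjugator (u₁ ++ u₂) (v₁ ++ v₂) ((1 : G) * w.prod) := by
        rw [one_mul]; exact hpc
      have hpc2 : IsPCConjugator (u₁ ++ u₂) (v₁ ++ v₂) ((1 : G)⁻¹ * w.prod) := by
        rw [inv_one, one_mul]; exact hpc
      exact hne' (hband 1 hpc1 hpc2 k l hconn)
    · -- side 1 : `(w.prod, u2d)`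
      exfalso
      replace hconn : ConnectedComponents H 1 w (i - 1) i w.prod u2d k l := hconn
      obtain ⟨ω'', hc1, hc2, hmem⟩ := hconn
      obtain ⟨pre, suf, hsplit, hPm⟩ := derived_prefix hu2 k
      rw [one_mul, hPm] at hmem
      have hu2p : u₂.prod = pre.prod * suf.prod := by rw [hsplit, List.prod_append]
      refine hcontra (w.prod * pre.prod) ?_ (w.take (i-1)) []
        ((w.take (i-1)).prod⁻¹ * (w.prod * pre.prod)) (hwordtake _)
        (fun y hy => absurd hy List.not_mem_nil) ⟨ω'', hmem⟩ ?_ ?_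
      · refine ⟨suf ++ (u₁ ++ pre), v₂ ++ v₁, ?_, cyc_append v₁ v₂, ?_⟩
        · rw [hsplit, ← List.append_assoc]
          exact cyc_append (u₁ ++ pre) suf
        · simp only [List.prod_append]
          calc w.prod * pre.prod * (suf.prod * (u₁.prod * pre.prod))
              = w.prod * (pre.prod * suf.prod * u₁.prod) * pre.prod := by group
            _ = w.prod * (u₂.prod * u₁.prod) * pre.prod := by rw [← hu2p]
            _ = (v₂.prod * v₁.prod) * w.prod * pre.prod := by rw [heq']
            _ = (v₂.prod * v₁.prod) * (w.prod * pre.prod) := by rw [mul_assoc]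
      · rw [List.prod_nil, mul_one]
        group
      · simp only [List.length_take, List.length_nil]
        omega
    · -- side 2 : `(w.prod * u₂.prod, u1d)`
      exfalso
      replace hconn : ConnectedComponents H 1 w (i - 1) i (w.prod * u₂.prod) u1d k l := hconn
      obtain ⟨ω'', hc1, hc2, hmem⟩ := hconn
      obtain ⟨pre, suf, hsplit, hPm⟩ := derived_prefix hu1 k
      rw [one_mul, hPm] at hmem
      have hu1p : u₁.prod = pre.prod * suf.prod := by rw [hsplit, List.prod_append]
      refine hcontra (w.prod * u₂.prod * pre.prod) ?_ (w.take (i-1)) []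
        ((w.take (i-1)).prod⁻¹ * (w.prod * u₂.prod * pre.prod)) (hwordtake _)
        (fun y hy => absurd hy List.not_mem_nil) ⟨ω'', hmem⟩ ?_ ?_
      · refine ⟨(suf ++ u₂) ++ pre, v₂ ++ v₁, ?_, cyc_append v₁ v₂, ?_⟩
        · rw [hsplit, List.append_assoc]
          exact cyc_append pre (suf ++ u₂)
        · simp only [List.prod_append]
          calc w.prod * u₂.prod * pre.prod * (suf.prod * u₂.prod * pre.prod)
              = w.prod * (u₂.prod * (pre.prod * suf.prod)) * (u₂.prod * pre.prod) := by group
            _ = w.prod * (u₂.prod * u₁.prod) * (u₂.prod * pre.prod) := by rw [← hu1p]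
            _ = (v₂.prod * v₁.prod) * w.prod * (u₂.prod * pre.prod) := by rw [heq']
            _ = (v₂.prod * v₁.prod) * (w.prod * u₂.prod * pre.prod) := by group
      · rw [List.prod_nil, mul_one]
        group
      · simp only [List.length_take, List.length_nil]
        omega
    · -- side 3 : the opposite `w`-side, horizontal band
      replace hconn : ConnectedComponents H 1 w (i - 1) i ((v₂ ++ v₁).prod) w k l := hconn
      obtain ⟨hk, hl⟩ := hband ((v₂ ++ v₁).prod) hgv1 hgv2 k l hconn
      subst hk
      subst hl
      exact hconn
    · -- side 4 : `(1, v2d)`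
      exfalso
      replace hconn : ConnectedComponents H 1 w (i - 1) i (1 : G) v2d k l := hconn
      obtain ⟨ω'', hc1, hc2, hmem⟩ := hconn
      obtain ⟨pre, suf, hsplit, hPm⟩ := derived_prefix hv2 k
      rw [one_mul, one_mul, hPm] at hmem
      have hsmem : w.getD (i-1) 1 ∈ H ω'' := hc1.2.2.1 (i-1) le_rfl (by omega)
      have hv2p : v₂.prod = pre.prod * suf.prod := by rw [hsplit, List.prod_append]
      refine hcontra (pre.prod⁻¹ * w.prod) ?_ [] (w.drop i)
        (((w.take (i-1)).prod⁻¹ * pre.prod)⁻¹ * w.getD (i-1) 1)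
        (fun y hy => absurd hy List.not_mem_nil) (hworddrop _)
        ⟨ω'', mul_mem (inv_mem hmem) hsmem⟩ ?_ ?_
      · refine ⟨u₂ ++ u₁, suf ++ (v₁ ++ pre), cyc_append u₁ u₂, ?_, ?_⟩
        · rw [hsplit, ← List.append_assoc]
          exact cyc_append (v₁ ++ pre) suf
        · simp only [List.prod_append]
          calc pre.prod⁻¹ * w.prod * (u₂.prod * u₁.prod)
              = pre.prod⁻¹ * (w.prod * (u₂.prod * u₁.prod)) := by group
            _ = pre.prod⁻¹ * ((v₂.prod * v₁.prod) * w.prod) := by rw [heq']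
            _ = pre.prod⁻¹ * ((pre.prod * suf.prod * v₁.prod) * w.prod) := by rw [hv2p]
            _ = suf.prod * (v₁.prod * pre.prod) * (pre.prod⁻¹ * w.prod) := by group
      · rw [List.prod_nil, one_mul]
        have h1 := prod_take_getD (w := w) hi1 hin
        have h2 := prod_take_drop w i
        calc ((w.take (i-1)).prod⁻¹ * pre.prod)⁻¹ * w.getD (i-1) 1 * (w.drop i).prod
            = pre.prod⁻¹ * ((w.take (i-1)).prod * w.getD (i-1) 1 * (w.drop i).prod) := by
              group
          _ = pre.prod⁻¹ * w.prod := by rw [h1, h2]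
      · simp only [List.length_nil, List.length_drop]
        omega
    · -- side 5 : `(v₂.prod, v1d)`
      exfalso
      replace hconn : ConnectedComponents H 1 w (i - 1) i v₂.prod v1d k l := hconn
      obtain ⟨ω'', hc1, hc2, hmem⟩ := hconn
      obtain ⟨pre, suf, hsplit, hPm⟩ := derived_prefix hv1 k
      rw [one_mul, hPm] at hmem
      have hsmem : w.getD (i-1) 1 ∈ H ω'' := hc1.2.2.1 (i-1) le_rfl (by omega)
      have hv1p : v₁.prod = pre.prod * suf.prod := by rw [hsplit, List.prod_append]
      refine hcontra ((v₂.prod * pre.prod)⁻¹ * w.prod) ?_ [] (w.drop i)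
        (((w.take (i-1)).prod⁻¹ * (v₂.prod * pre.prod))⁻¹ * w.getD (i-1) 1)
        (fun y hy => absurd hy List.not_mem_nil) (hworddrop _)
        ⟨ω'', mul_mem (inv_mem hmem) hsmem⟩ ?_ ?_
      · refine ⟨u₂ ++ u₁, (suf ++ v₂) ++ pre, cyc_append u₁ u₂, ?_, ?_⟩
        · rw [hsplit, List.append_assoc]
          exact cyc_append pre (suf ++ v₂)
        · simp only [List.prod_append]
          calc (v₂.prod * pre.prod)⁻¹ * w.prod * (u₂.prod * u₁.prod)
              = (v₂.prod * pre.prod)⁻¹ * (w.prod * (u₂.prod * u₁.prod)) := by group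
            _ = (v₂.prod * pre.prod)⁻¹ * ((v₂.prod * v₁.prod) * w.prod) := by rw [heq']
            _ = (v₂.prod * pre.prod)⁻¹ * ((v₂.prod * (pre.prod * suf.prod)) * w.prod) := by
                rw [hv1p]
            _ = suf.prod * v₂.prod * pre.prod * ((v₂.prod * pre.prod)⁻¹ * w.prod) := by group
      · rw [List.prod_nil, one_mul]
        have h1 := prod_take_getD (w := w) hi1 hin
        have h2 := prod_take_drop w i
        calc ((w.take (i-1)).prod⁻¹ * (v₂.prod * pre.prod))⁻¹ * w.getD (i-1) 1
                * (w.drop i).prod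
            = (v₂.prod * pre.prod)⁻¹
                * ((w.take (i-1)).prod * w.getD (i-1) 1 * (w.drop i).prod) := by group
          _ = (v₂.prod * pre.prod)⁻¹ * w.prod := by rw [h1, h2]
      · simp only [List.length_nil, List.length_drop]
        omega
  · -- part (2)
    intro _ k l hconn
    exact hband ((v₂ ++ v₁).prod) hgv1 hgv2 k l hconn

end PCLPaper
end
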